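/- arXiv:1801.03653 — 9 statements merged into one kernel-verified Lean document; each statement's English description precedes it below -/
import Mathlib

section
/- For any positive integers j, k and s, the Cohen–Ramanujan sum satisfies c_k^{(s)}(j) = Σ_{d : d^s divides gcd-type condition} d^s μ(k/d), i.e. c_k^{(s)}(j) = Σ over positive integers d with d ∣ k and d^s ∣ j of d^s · μ(k/d). -/
open Finset


lemma lcm_pow_dvd' {s a b m : ℕ} (hm : m ≠ 0) (ha : a ^ s ∣ m) (hb : b ^ s ∣ m) :
    Nat.lcm a b ^ s ∣ m := by
  rcases Nat.eq_zero_or_pos s with rfl | hs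
  · simpa using hm
  have ha0 : a ≠ 0 := by
    rintro rfl
    rw [zero_pow hs.ne'] at ha
    exact hm (Nat.eq_zero_of_zero_dvd ha)
  have hb0 : b ≠ 0 := by
    rintro rfl
    rw [zero_pow hs.ne'] at hb
    exact hm (Nat.eq_zero_of_zero_dvd hb)
  have hl0 : Nat.lcm a b ≠ 0 := Nat.lcm_ne_zero ha0 hb0
  rw [← Nat.factorization_le_iff_dvd (pow_ne_zero _ hl0) hm]
  rw [Nat.factorization_pow, Nat.factorization_lcm ha0 hb0]
  rw [← Nat.factorization_le_iff_dvd (pow_ne_zero _ ha0) hm, Nat.factorization_pow] at ha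
  rw [← Nat.factorization_le_iff_dvd (pow_ne_zero _ hb0) hm, Nat.factorization_pow] at hb
  intro p
  have h1 := ha p
  have h2 := hb p
  simp only [Finsupp.smul_apply, Finsupp.sup_apply, smul_eq_mul] at *
  rcases le_total (a.factorization p) (b.factorization p) with h | h
  · rwa [sup_eq_right.mpr h]
  · rwa [sup_eq_left.mpr h]

lemma finset_lcm_pow_dvd' (S : Finset ℕ) (s m : ℕ) (hm : m ≠ 0)
    (h : ∀ a ∈ S, a ^ s ∣ m) : (S.lcm _root_.id) ^ s ∣ m := by
  induction S using Finset.induction with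
  | empty => simpa using (one_dvd m)
  | @insert x T hx ih =>
    rw [Finset.lcm_insert]
    exact lcm_pow_dvd' hm (h x (Finset.mem_insert_self x T))
      (ih fun a ha => h a (Finset.mem_insert_of_mem ha))

open ArithmeticFunction in
lemma moebius_indicator' (s k m : ℕ) (hk : 0 < k) (hm : 0 < m) :
    ∑ d ∈ k.divisors.filter (fun d => d ^ s ∣ m), (moebius d : ℤ)
      = if (∀ d ∈ k.divisors, d ^ s ∣ m → d = 1) then 1 else 0 := by
  set S := k.divisors.filter (fun d => d ^ s ∣ m) with hSdef
  set g := S.lcm _root_.id with hgdef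
  have hgk : g ∣ k :=
    Finset.lcm_dvd fun a ha => (Nat.mem_divisors.mp (Finset.mem_filter.mp ha).1).1
  have hg0 : g ≠ 0 := by
    rintro h
    rw [h] at hgk
    exact hk.ne' (Nat.eq_zero_of_zero_dvd hgk)
  have hgs : g ^ s ∣ m :=
    finset_lcm_pow_dvd' S s m hm.ne' fun a ha => (Finset.mem_filter.mp ha).2
  have hS : S = g.divisors := by
    ext d
    simp only [hSdef, Finset.mem_filter, Nat.mem_divisors]
    constructor
    · rintro ⟨⟨hdk, -⟩, hds⟩
      refine ⟨?_, hg0⟩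
      exact Finset.dvd_lcm (Finset.mem_filter.mpr ⟨Nat.mem_divisors.mpr ⟨hdk, hk.ne'⟩, hds⟩)
    · rintro ⟨hdg, -⟩
      exact ⟨⟨hdg.trans hgk, hk.ne'⟩, (pow_dvd_pow_of_dvd hdg s).trans hgs⟩
  have hsum : ∑ d ∈ g.divisors, (moebius d : ℤ) = if g = 1 then 1 else 0 := by
    have h1 : ((moebius * zeta : ArithmeticFunction ℤ)) g = ∑ d ∈ g.divisors, (moebius d : ℤ) :=
      coe_mul_zeta_apply
    rw [moebius_mul_coe_zeta] at h1
    rw [← h1, one_apply]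
  rw [hS, hsum]
  congr 1
  simp only [eq_iff_iff]
  constructor
  · intro hg1 d hd hds
    have : d ∈ S := Finset.mem_filter.mpr ⟨hd, hds⟩
    have := Finset.dvd_lcm (f := _root_.id) this
    rw [← hgdef, hg1] at this
    exact Nat.dvd_one.mp this
  · intro hall
    refine Nat.dvd_one.mp ?_
    refine Finset.lcm_dvd fun a ha => ?_
    obtain ⟨hak, has⟩ := Finset.mem_filter.mp ha
    rw [hall a hak has]
    exact Nat.dvd_refl 1

lemma sum_exp_eq' (n j : ℕ) (hn : 0 < n) :
    ∑ t ∈ Finset.Icc 1 n, Complex.exp (2 * Real.pi * Complex.I * t * j / n)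
      = if n ∣ j then (n : ℂ) else 0 := by
  have hn0 : (n : ℂ) ≠ 0 := Nat.cast_ne_zero.mpr hn.ne'
  set z : ℂ := Complex.exp (2 * Real.pi * Complex.I * j / n) with hz
  have hterm : ∀ t : ℕ, Complex.exp (2 * Real.pi * Complex.I * t * j / n) = z ^ t := by
    intro t
    rw [hz, ← Complex.exp_nat_mul]
    congr 1
    ring
  have hzn : z ^ n = 1 := by
    rw [hz, ← Complex.exp_nat_mul]
    have : (n : ℂ) * (2 * Real.pi * Complex.I * j / n) = (j : ℤ) * (2 * Real.pi * Complex.I) := by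
      push_cast
      field_simp
    rw [this, Complex.exp_int_mul_two_pi_mul_I]
  simp only [hterm]
  by_cases hdvd : n ∣ j
  · obtain ⟨c, rfl⟩ := hdvd
    have hz1 : z = 1 := by
      rw [hz]
      have : 2 * Real.pi * Complex.I * (↑(n * c)) / n = (c : ℤ) * (2 * Real.pi * Complex.I) := by
        push_cast
        field_simp
      rw [this, Complex.exp_int_mul_two_pi_mul_I]
    simp [hz1, Nat.card_Icc]
  · have hz1 : z ≠ 1 := by
      intro h
      rw [hz, Complex.exp_eq_one_iff] at h
      obtain ⟨c, hc⟩ := h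
      apply hdvd
      have h2 : (2 * Real.pi * Complex.I : ℂ) ≠ 0 := Complex.two_pi_I_ne_zero
      have hjc : (j : ℂ) = (c : ℂ) * n := by
        field_simp at hc
        exact hc.trans (by ring)
      have hj : (j : ℤ) = c * n := by exact_mod_cast hjc
      exact Int.natCast_dvd_natCast.mp ⟨c, by linarith⟩
    rw [if_neg hdvd]
    have : Finset.Icc 1 n = Finset.Ico 1 (n + 1) := by
      rw [Finset.Ico_add_one_right_eq_Icc]
    rw [this, Finset.sum_Ico_eq_sum_range]
    simp only [Nat.add_sub_cancel]
    have : ∀ i, z ^ (1 + i) = z * z ^ i := fun i => by rw [pow_add, pow_one]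
    simp only [this, ← Finset.mul_sum]
    rw [geom_sum_eq hz1, hzn]
    simp

lemma sum_multiples' {N c : ℕ} (hc : 0 < c) (hcd : c ∣ N) (f : ℕ → ℂ) :
    ∑ m ∈ (Finset.Icc 1 N).filter (fun m => c ∣ m), f m
      = ∑ t ∈ Finset.Icc 1 (N / c), f (c * t) := by
  refine Finset.sum_nbij' (fun m => m / c) (fun t => c * t) ?_ ?_ ?_ ?_ ?_
  · intro m hm
    obtain ⟨hm1, hm2⟩ := Finset.mem_filter.mp hm
    obtain ⟨h1, h2⟩ := Finset.mem_Icc.mp hm1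
    refine Finset.mem_Icc.mpr ⟨?_, ?_⟩
    · exact (Nat.one_le_div_iff hc).mpr (Nat.le_of_dvd (lt_of_lt_of_le one_pos h1) hm2)
    · exact Nat.div_le_div_right h2
  · intro t ht
    obtain ⟨h1, h2⟩ := Finset.mem_Icc.mp ht
    refine Finset.mem_filter.mpr ⟨Finset.mem_Icc.mpr ⟨?_, ?_⟩, Dvd.intro _ rfl⟩
    · exact Nat.one_le_iff_ne_zero.mpr (by positivity)
    · calc c * t ≤ c * (N / c) := Nat.mul_le_mul_left c h2
        _ ≤ N := Nat.mul_div_le N c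
  · intro m hm
    exact Nat.mul_div_cancel' (Finset.mem_filter.mp hm).2
  · intro t ht
    exact Nat.mul_div_cancel_left t hc
  · intro m hm
    rw [Nat.mul_div_cancel' (Finset.mem_filter.mp hm).2]

/-- The Cohen–Ramanujan sum `c_k^{(s)}(j)`, defined as the sum of `exp(2πi m j / k^s)` over
`1 ≤ m ≤ k^s` with `(m, k^s)_s = 1` (i.e. no divisor `d > 1` of `k` satisfies `d^s ∣ m`),
equals `∑_{d ∣ k, d^s ∣ j} d^s μ(k/d)`. -/
theorem cohen_ramanujan_sum (s j k : ℕ) (hs : 0 < s) (hj : 0 < j) (hk : 0 < k) :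
    ∑ m ∈ (Finset.Icc 1 (k ^ s)).filter
        (fun m => ∀ d ∈ k.divisors, d ^ s ∣ m → d = 1),
      Complex.exp (2 * Real.pi * Complex.I * m * j / (k : ℂ) ^ s)
    = ∑ d ∈ k.divisors.filter (fun d => d ^ s ∣ j),
        (d : ℂ) ^ s * ((ArithmeticFunction.moebius (k / d) : ℤ) : ℂ) := by
  classical
  have hk0 : k ≠ 0 := hk.ne'
  rw [Finset.sum_filter]
  have step1 : ∀ m ∈ Finset.Icc 1 (k ^ s),
      (if (∀ d ∈ k.divisors, d ^ s ∣ m → d = 1)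
        then Complex.exp (2 * Real.pi * Complex.I * m * j / (k : ℂ) ^ s) else 0)
      = ∑ d ∈ k.divisors, (if d ^ s ∣ m then
          ((ArithmeticFunction.moebius d : ℤ) : ℂ) *
            Complex.exp (2 * Real.pi * Complex.I * m * j / (k : ℂ) ^ s) else 0) := by
    intro m hm
    have hm1 : 0 < m := lt_of_lt_of_le one_pos (Finset.mem_Icc.mp hm).1
    rw [← Finset.sum_filter, ← Finset.sum_mul]
    have hcast : (∑ d ∈ k.divisors.filter (fun d => d ^ s ∣ m),
        ((ArithmeticFunction.moebius d : ℤ) : ℂ))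
        = (((if (∀ d ∈ k.divisors, d ^ s ∣ m → d = 1) then (1 : ℤ) else 0) : ℤ) : ℂ) := by
      rw [← moebius_indicator' s k m hk hm1]
      push_cast
      rfl
    rw [hcast]
    split_ifs <;> simp
  rw [Finset.sum_congr rfl step1, Finset.sum_comm]
  have step2 : ∀ d ∈ k.divisors,
      (∑ m ∈ Finset.Icc 1 (k ^ s), if d ^ s ∣ m then
          ((ArithmeticFunction.moebius d : ℤ) : ℂ) *
            Complex.exp (2 * Real.pi * Complex.I * m * j / (k : ℂ) ^ s) else 0)
      = ((ArithmeticFunction.moebius d : ℤ) : ℂ) *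
          (if (k / d) ^ s ∣ j then (((k / d) ^ s : ℕ) : ℂ) else 0) := by
    intro d hd
    obtain ⟨hdk, -⟩ := Nat.mem_divisors.mp hd
    have hd0 : 0 < d := Nat.pos_of_dvd_of_pos hdk hk
    have hds : d ^ s ∣ k ^ s := pow_dvd_pow_of_dvd hdk s
    have hkd : k / d * d = k := Nat.div_mul_cancel hdk
    have hkd0 : 0 < k / d := Nat.div_pos (Nat.le_of_dvd hk hdk) hd0
    rw [← Finset.sum_filter, ← Finset.mul_sum]
    congr 1
    rw [sum_multiples' (pow_pos hd0 s) hds]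
    have hdiv : k ^ s / d ^ s = (k / d) ^ s := by
      conv_lhs => rw [← hkd, mul_pow, Nat.mul_div_cancel _ (pow_pos hd0 s)]
    rw [hdiv]
    have hd0' : (d : ℂ) ≠ 0 := Nat.cast_ne_zero.mpr hd0.ne'
    have hkd0' : (((k / d : ℕ)) : ℂ) ≠ 0 := Nat.cast_ne_zero.mpr hkd0.ne'
    have harg : ∀ t : ℕ,
        Complex.exp (2 * Real.pi * Complex.I * (↑(d ^ s * t)) * j / (k : ℂ) ^ s)
        = Complex.exp (2 * Real.pi * Complex.I * t * j / ((((k / d) ^ s : ℕ)) : ℂ)) := by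
      intro t
      congr 1
      have hkc : (k : ℂ) ^ s = ((k / d : ℕ) : ℂ) ^ s * (d : ℂ) ^ s := by
        rw [← mul_pow]
        congr 1
        exact_mod_cast congrArg (Nat.cast (R := ℂ)) hkd.symm
      rw [hkc]
      push_cast
      field_simp
    rw [Finset.sum_congr rfl (fun t _ => harg t)]
    exact sum_exp_eq' ((k / d) ^ s) j (pow_pos hkd0 s)
  rw [Finset.sum_congr rfl step2]
  have step3 : ∀ d ∈ k.divisors,
      ((ArithmeticFunction.moebius d : ℤ) : ℂ) *
          (if (k / d) ^ s ∣ j then (((k / d) ^ s : ℕ) : ℂ) else 0)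
      = (fun e : ℕ => if e ^ s ∣ j then
            (e : ℂ) ^ s * ((ArithmeticFunction.moebius (k / e) : ℤ) : ℂ) else 0) (k / d) := by
    intro d hd
    obtain ⟨hdk, -⟩ := Nat.mem_divisors.mp hd
    simp only
    rw [Nat.div_div_self hdk hk0]
    split_ifs
    · push_cast
      ring
    · ring
  rw [Finset.sum_congr rfl step3]
  rw [Nat.sum_div_divisors k
    (fun e : ℕ => if e ^ s ∣ j then (e : ℂ) ^ s * ((ArithmeticFunction.moebius (k / e) : ℤ) : ℂ) else 0)]
  rw [Finset.sum_filter]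
end

section
/- For any arithmetical functions f, g and fixed positive integers s, k, one has (1/k^s) Σ_{j=1}^{k^s} s_k^{(s)}(j) log Γ(j/k^s) = log√(2π) · ((f/id_s) * g)(k) − log√(2π) · (f*g)(k)/k^s − (s/(2k^s)) · (f * (g·log))(k), where * denotes Dirichlet convolution. -/
open Finset

private lemma abs_one_sub_exp (θ : ℝ) :
    ‖1 - Complex.exp (θ * Complex.I)‖ = 2 * |Real.sin (θ / 2)| := by
  have hre : (1 - Complex.exp (θ * Complex.I)).re = 1 - Real.cos θ := by
    simp [Complex.exp_ofReal_mul_I_re]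
  have him : (1 - Complex.exp (θ * Complex.I)).im = -Real.sin θ := by
    simp [Complex.exp_ofReal_mul_I_im]
  rw [Complex.norm_def, Complex.normSq_apply, hre, him]
  have h2 : 2 * (θ / 2) = θ := by ring
  have hc : Real.cos θ = 2 * Real.cos (θ / 2) ^ 2 - 1 := by
    have := Real.cos_two_mul (θ / 2); rw [h2] at this; exact this
  have h : (1 - Real.cos θ) * (1 - Real.cos θ) + -Real.sin θ * -Real.sin θ
      = (2 * |Real.sin (θ / 2)|) ^ 2 := by
    have hs := Real.sin_sq_add_cos_sq (θ / 2)
    have hs2 := Real.sin_sq_add_cos_sq θ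
    nlinarith [sq_abs (Real.sin (θ / 2)), abs_nonneg (Real.sin (θ / 2))]
  rw [h, Real.sqrt_sq (by positivity)]

private lemma prod_sin_eq (m : ℕ) :
    ∏ j ∈ Finset.range m, Real.sin (Real.pi * (j + 1) / (m + 1)) = (m + 1) / 2 ^ m := by
  have hμ : IsPrimitiveRoot (Complex.exp (2 * Real.pi * Complex.I / ((m + 1 : ℕ) : ℂ))) (m + 1) :=
    Complex.isPrimitiveRoot_exp (m + 1) (Nat.succ_ne_zero m)
  have key := hμ.prod_one_sub_pow_eq_order
  have habs := congrArg norm key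
  rw [norm_prod] at habs
  have hterm : ∀ k ∈ Finset.range m,
      ‖1 - Complex.exp (2 * Real.pi * Complex.I / ((m + 1 : ℕ) : ℂ)) ^ (k + 1)‖
        = 2 * Real.sin (Real.pi * (k + 1) / (m + 1)) := by
    intro k hk
    have hk' : k < m := Finset.mem_range.mp hk
    have hpow : Complex.exp (2 * Real.pi * Complex.I / ((m + 1 : ℕ) : ℂ)) ^ (k + 1)
        = Complex.exp ((2 * Real.pi * (k + 1) / (m + 1) : ℝ) * Complex.I) := by
      rw [← Complex.exp_nat_mul]
      congr 1
      push_cast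
      have : ((m : ℂ) + 1) ≠ 0 := by
        exact_mod_cast (Nat.cast_ne_zero (R := ℂ)).mpr (Nat.succ_ne_zero m)
      field_simp
    rw [hpow, abs_one_sub_exp]
    have harg : 2 * Real.pi * (k + 1) / (m + 1) / 2 = Real.pi * (k + 1) / (m + 1) := by ring
    rw [harg, abs_of_nonneg]
    apply Real.sin_nonneg_of_nonneg_of_le_pi
    · positivity
    · rw [div_le_iff₀ (by positivity)]
      have : (k : ℝ) + 1 ≤ (m : ℝ) + 1 := by
        have : (k : ℝ) ≤ m := by exact_mod_cast hk'.le
        linarith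
      nlinarith [Real.pi_pos]
  rw [Finset.prod_congr rfl hterm] at habs
  have habs2 : ‖(m : ℂ) + 1‖ = (m : ℝ) + 1 := by
    rw [show ((m : ℂ) + 1) = ((m + 1 : ℕ) : ℂ) by push_cast; ring, Complex.norm_natCast]
    push_cast; ring
  rw [habs2, Finset.prod_mul_distrib, Finset.prod_const, Finset.card_range] at habs
  have h2 : (0 : ℝ) < 2 ^ m := by positivity
  field_simp at habs ⊢
  linarith [habs]

private lemma sum_log_gamma (n : ℕ) (hn : 0 < n) :
    ∑ j ∈ Finset.Icc 1 n, Real.log (Real.Gamma ((j : ℝ) / n)) =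
      ((n : ℝ) - 1) / 2 * Real.log (2 * Real.pi) - Real.log n / 2 := by
  obtain ⟨m, rfl⟩ : ∃ m, n = m + 1 := ⟨n - 1, (Nat.succ_pred_eq_of_pos hn).symm⟩
  have hIcc : Finset.Icc 1 (m + 1) = Finset.Ico 1 (m + 2) := rfl
  rw [hIcc, Finset.sum_Ico_eq_sum_range]
  have harith : m + 2 - 1 = m + 1 := rfl
  rw [harith, Finset.sum_range_succ]
  have hlast : Real.log (Real.Gamma ((↑(1 + m) : ℝ) / (↑(m + 1) : ℝ))) = 0 := by
    rw [show ((↑(1 + m) : ℝ) / (↑(m + 1) : ℝ)) = 1 by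
      push_cast; rw [div_eq_one_iff_eq (by positivity)]; ring]
    simp [Real.Gamma_one]
  rw [hlast, add_zero]
  -- S' = ∑ i in range m, log Γ((i+1)/(m+1))
  set S : ℝ := ∑ i ∈ Finset.range m, Real.log (Real.Gamma ((↑(1 + i) : ℝ) / (↑(m + 1) : ℝ))) with hS
  have hM : (0 : ℝ) < (m : ℝ) + 1 := by positivity
  have hx : ∀ i, i < m → (0 : ℝ) < (↑(1 + i) : ℝ) / (↑(m + 1) : ℝ) ∧
      (↑(1 + i) : ℝ) / (↑(m + 1) : ℝ) < 1 := by
    intro i hi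
    constructor
    · positivity
    · rw [div_lt_one (by push_cast; linarith)]
      push_cast
      have : (i : ℝ) < m := by exact_mod_cast hi
      linarith
  have hrefl : S = ∑ i ∈ Finset.range m,
      Real.log (Real.Gamma (1 - (↑(1 + i) : ℝ) / (↑(m + 1) : ℝ))) := by
    rw [hS, ← Finset.sum_range_reflect]
    apply Finset.sum_congr rfl
    intro i hi
    have hi' : i < m := Finset.mem_range.mp hi
    congr 2
    have h1 : 1 + (m - 1 - i) = m - i := by omega
    rw [h1]
    have h2 : ((m - i : ℕ) : ℝ) = (m : ℝ) - i := by
      have : i ≤ m := hi'.le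
      push_cast [this]; ring
    rw [h2, eq_sub_iff_add_eq, ← add_div, div_eq_one_iff_eq (by positivity)]
    push_cast; ring
  have hdouble : 2 * S = (m : ℝ) * Real.log (2 * Real.pi) - Real.log ((m : ℝ) + 1) := by
    have : 2 * S = S + S := by ring
    rw [this]
    nth_rewrite 2 [hrefl]
    rw [← Finset.sum_add_distrib]
    have hterm : ∀ i ∈ Finset.range m,
        Real.log (Real.Gamma ((↑(1 + i) : ℝ) / (↑(m + 1) : ℝ))) +
          Real.log (Real.Gamma (1 - (↑(1 + i) : ℝ) / (↑(m + 1) : ℝ)))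
        = Real.log Real.pi - Real.log (Real.sin (Real.pi * (i + 1) / (m + 1))) := by
      intro i hi
      have hi' : i < m := Finset.mem_range.mp hi
      obtain ⟨hx0, hx1⟩ := hx i hi'
      set x : ℝ := (↑(1 + i) : ℝ) / (↑(m + 1) : ℝ) with hxdef
      have hg1 : 0 < Real.Gamma x := Real.Gamma_pos_of_pos hx0
      have hg2 : 0 < Real.Gamma (1 - x) := Real.Gamma_pos_of_pos (by linarith)
      rw [← Real.log_mul hg1.ne' hg2.ne', Real.Gamma_mul_Gamma_one_sub]
      have hsin : 0 < Real.sin (Real.pi * x) := by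
        apply Real.sin_pos_of_pos_of_lt_pi
        · positivity
        · nlinarith [Real.pi_pos]
      rw [Real.log_div Real.pi_pos.ne' hsin.ne']
      congr 3
      rw [hxdef]; push_cast; ring
    rw [Finset.sum_congr rfl hterm, Finset.sum_sub_distrib, Finset.sum_const,
      Finset.card_range, nsmul_eq_mul]
    have hlogprod : ∑ i ∈ Finset.range m, Real.log (Real.sin (Real.pi * (i + 1) / (m + 1)))
        = Real.log ((m : ℝ) + 1) - (m : ℝ) * Real.log 2 := by
      rw [← Real.log_prod]
      · rw [prod_sin_eq m, Real.log_div (by positivity) (by positivity), Real.log_pow]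
      · intro i hi
        have hi' : i < m := Finset.mem_range.mp hi
        apply ne_of_gt
        apply Real.sin_pos_of_pos_of_lt_pi
        · positivity
        · rw [div_lt_iff₀ (by positivity)]
          have : (i : ℝ) + 1 < (m : ℝ) + 1 := by
            have : (i : ℝ) < m := by exact_mod_cast hi'
            linarith
          nlinarith [Real.pi_pos]
    rw [hlogprod, Real.log_mul (by norm_num) Real.pi_pos.ne']
    ring
  have : S = ((m : ℝ) * Real.log (2 * Real.pi) - Real.log ((m : ℝ) + 1)) / 2 := by
    linarith
  rw [this]
  push_cast
  ring

/-- For arithmetical functions `f, g` and positive integers `s, k`, with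
`s_k^{(s)}(j) = ∑_{d ∣ k, d^s ∣ j} f(d) g(k/d)`:
`(1/k^s) ∑_{j=1}^{k^s} s_k^{(s)}(j) log Γ(j/k^s)
  = log√(2π)·((f/id_s)*g)(k) − log√(2π)·(f*g)(k)/k^s − (s/(2k^s))·(f*(g·log))(k)`. -/
theorem weighted_gamma_average (f g : ℕ → ℝ) (s k : ℕ) (hs : 0 < s) (hk : 0 < k) :
    (1 / (k : ℝ) ^ s) * ∑ j ∈ Finset.Icc 1 (k ^ s),
        (∑ d ∈ k.divisors.filter (fun d => d ^ s ∣ j), f d * g (k / d)) *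
          Real.log (Real.Gamma ((j : ℝ) / (k : ℝ) ^ s))
    = Real.log (Real.sqrt (2 * Real.pi)) *
        (∑ p ∈ k.divisorsAntidiagonal, f p.1 / (p.1 : ℝ) ^ s * g p.2)
      - Real.log (Real.sqrt (2 * Real.pi)) *
        (∑ p ∈ k.divisorsAntidiagonal, f p.1 * g p.2) / (k : ℝ) ^ s
      - ((s : ℝ) / (2 * (k : ℝ) ^ s)) *
        (∑ p ∈ k.divisorsAntidiagonal, f p.1 * (g p.2 * Real.log p.2)) := by
  have hks : (0 : ℝ) < (k : ℝ) ^ s := by positivity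
  -- Step 1: swap the order of summation
  have hswap : ∑ j ∈ Finset.Icc 1 (k ^ s),
        (∑ d ∈ k.divisors.filter (fun d => d ^ s ∣ j), f d * g (k / d)) *
          Real.log (Real.Gamma ((j : ℝ) / (k : ℝ) ^ s))
      = ∑ d ∈ k.divisors, f d * g (k / d) *
          ∑ j ∈ (Finset.Icc 1 (k ^ s)).filter (fun j => d ^ s ∣ j),
            Real.log (Real.Gamma ((j : ℝ) / (k : ℝ) ^ s)) := by
    simp_rw [Finset.sum_mul, Finset.sum_filter, Finset.mul_sum]
    rw [Finset.sum_comm]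
    apply Finset.sum_congr rfl
    intro d _
    apply Finset.sum_congr rfl
    intro j _
    rw [mul_ite, mul_zero]
  rw [hswap]
  -- Step 2: evaluate inner sums
  have hinner : ∀ d ∈ k.divisors,
      ∑ j ∈ (Finset.Icc 1 (k ^ s)).filter (fun j => d ^ s ∣ j),
          Real.log (Real.Gamma ((j : ℝ) / (k : ℝ) ^ s))
      = (((k / d : ℕ) : ℝ) ^ s - 1) / 2 * Real.log (2 * Real.pi)
          - Real.log (((k / d : ℕ) : ℝ) ^ s) / 2 := by
    intro d hd
    obtain ⟨hdvd, -⟩ := Nat.mem_divisors.mp hd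
    have hd0 : 0 < d := Nat.pos_of_dvd_of_pos hdvd hk
    set e := k / d with he
    have hde : d * e = k := Nat.mul_div_cancel' hdvd
    have he0 : 0 < e := Nat.div_pos (Nat.le_of_dvd hk hdvd) hd0
    have hsum : ∑ j ∈ (Finset.Icc 1 (k ^ s)).filter (fun j => d ^ s ∣ j),
          Real.log (Real.Gamma ((j : ℝ) / (k : ℝ) ^ s))
        = ∑ m ∈ Finset.Icc 1 (e ^ s), Real.log (Real.Gamma ((m : ℝ) / ((e ^ s : ℕ) : ℝ))) := by
      apply Finset.sum_nbij' (fun j => j / d ^ s) (fun m => d ^ s * m)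
      · intro j hj
        simp only [Finset.mem_filter, Finset.mem_Icc] at hj
        obtain ⟨⟨hj1, hj2⟩, hjd⟩ := hj
        simp only [Finset.mem_Icc]
        constructor
        · rw [Nat.one_le_div_iff (pow_pos hd0 s)]
          exact Nat.le_of_dvd (by omega) hjd
        · rw [Nat.div_le_iff_le_mul_add_pred (pow_pos hd0 s)]
          calc j ≤ k ^ s := hj2
            _ = d ^ s * e ^ s := by rw [← mul_pow, hde]
            _ ≤ d ^ s * e ^ s + (d ^ s - 1) := Nat.le_add_right _ _
      · intro m hm
        simp only [Finset.mem_Icc] at hm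
        simp only [Finset.mem_filter, Finset.mem_Icc]
        refine ⟨⟨?_, ?_⟩, Dvd.intro m rfl⟩
        · exact Nat.mul_pos (pow_pos hd0 s) hm.1
        · calc d ^ s * m ≤ d ^ s * e ^ s := Nat.mul_le_mul_left _ hm.2
            _ = k ^ s := by rw [← mul_pow, hde]
      · intro j hj
        simp only [Finset.mem_filter] at hj
        exact Nat.mul_div_cancel' hj.2
      · intro m _
        exact Nat.mul_div_cancel_left m (pow_pos hd0 s)
      · intro j hj
        simp only [Finset.mem_filter] at hj
        obtain ⟨-, hjd⟩ := hj
        congr 2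
        obtain ⟨m, rfl⟩ := hjd
        rw [Nat.mul_div_cancel_left m (pow_pos hd0 s)]
        have hkde : (k : ℝ) ^ s = (d : ℝ) ^ s * (e : ℝ) ^ s := by
          rw [← mul_pow]; congr 1; exact_mod_cast hde.symm
        rw [hkde]
        push_cast
        rw [mul_div_mul_left _ _ (by positivity : ((d:ℝ)^s) ≠ 0)]
    rw [hsum]
    have := sum_log_gamma (e ^ s) (by positivity)
    rw [this]
    push_cast
    ring
  rw [Finset.sum_congr rfl (fun d hd => by rw [hinner d hd])]
  -- Step 3: rewrite RHS antidiagonal sums as divisor sums and compare termwise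
  rw [Nat.sum_divisorsAntidiagonal (fun a b => f a / (a : ℝ) ^ s * g b),
    Nat.sum_divisorsAntidiagonal (fun a b => f a * g b),
    Nat.sum_divisorsAntidiagonal (fun a b => f a * (g b * Real.log b))]
  simp only [Finset.mul_sum, Finset.sum_div]
  rw [← Finset.sum_sub_distrib, ← Finset.sum_sub_distrib]
  apply Finset.sum_congr rfl
  intro d hd
  obtain ⟨hdvd, -⟩ := Nat.mem_divisors.mp hd
  have hd0 : 0 < d := Nat.pos_of_dvd_of_pos hdvd hk
  set e := k / d with he
  have hde : d * e = k := Nat.mul_div_cancel' hdvd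
  have he0 : 0 < e := Nat.div_pos (Nat.le_of_dvd hk hdvd) hd0
  have hkde : (k : ℝ) ^ s = (d : ℝ) ^ s * (e : ℝ) ^ s := by
    rw [← mul_pow]; congr 1; exact_mod_cast hde.symm
  have hD : (0 : ℝ) < (d : ℝ) ^ s := by positivity
  have hE : (0 : ℝ) < (e : ℝ) ^ s := by positivity
  have hlogsqrt : Real.log (Real.sqrt (2 * Real.pi)) = Real.log (2 * Real.pi) / 2 :=
    Real.log_sqrt (by positivity)
  have hloge : Real.log ((e : ℝ) ^ s) = s * Real.log e := Real.log_pow (e : ℝ) s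
  rw [hlogsqrt, hloge, hkde]
  field_simp
end

section
/- For any arithmetical functions f, g, fixed positive integers s, m, k: (1/k^s) Σ_{j=0}^{k^s−1} B_m(j/k^s) s_k^{(s)}(j) = B_m · Σ_{dℓ = k} (f(d)/d^s)(g(ℓ)/ℓ^{ms}), where B_m(x) is the m-th Bernoulli polynomial and B_m = B_m(0). -/
open Finset PowerSeries

set_option maxHeartbeats 1000000

private lemma exp_telescope (n : ℕ) :
    (∑ i ∈ Finset.range n, rescale (i : ℚ) (exp ℚ)) * (exp ℚ - 1)
      = rescale (n : ℚ) (exp ℚ) - 1 := by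
  induction n with
  | zero => simp [rescale_zero]
  | succ n ih =>
    have h1 : rescale (1 : ℚ) (exp ℚ) = exp ℚ := by rw [rescale_one]; rfl
    have h : rescale (n : ℚ) (exp ℚ) * exp ℚ = rescale ((n : ℚ) + 1) (exp ℚ) := by
      rw [← exp_mul_exp_eq_exp_add, h1]
    rw [Finset.sum_range_succ, add_mul, ih, mul_sub, mul_one, h]
    push_cast
    ring

private lemma exp_sub_one_ne_zero : exp ℚ - 1 ≠ 0 := by
  intro h
  have := congrArg (PowerSeries.coeff (R := ℚ) 1) h
  simp [coeff_exp] at this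

private lemma rescale_exp_sub_one_ne_zero {n : ℕ} (hn : 0 < n) :
    rescale (n : ℚ) (exp ℚ) - 1 ≠ 0 := by
  intro h
  have := congrArg (PowerSeries.coeff (R := ℚ) 1) h
  simp [coeff_rescale, coeff_exp] at this
  omega

private lemma rescale_nat_X (n : ℕ) :
    rescale (n : ℚ) (X : ℚ⟦X⟧) = (n : ℚ) • X := by
  ext p
  rw [coeff_rescale, PowerSeries.coeff_smul, PowerSeries.coeff_X]
  split_ifs with h
  · subst h; simp
  · simp

private lemma bernoulli_mult (m n : ℕ) (hn : 0 < n) :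
    (n : ℚ) ^ m * ∑ i ∈ Finset.range n, ((Polynomial.bernoulli m).eval ((i : ℚ) / (n : ℚ))) =
      (n : ℚ) * _root_.bernoulli m := by
  have hn0 : (n : ℚ) ≠ 0 := Nat.cast_ne_zero.mpr hn.ne'
  set B : ℚ → ℚ⟦X⟧ := fun t => mk fun p => Polynomial.aeval t ((1 / (p.factorial : ℚ)) • Polynomial.bernoulli p)
    with hB
  have key : ∀ t : ℚ, B t * (exp ℚ - 1) = X * rescale t (exp ℚ) :=
    fun t => Polynomial.bernoulli_generating_function t
  have h1 : ∀ t : ℚ, rescale (n : ℚ) (B t) * (rescale (n : ℚ) (exp ℚ) - 1)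
      = rescale (n : ℚ) X * rescale (t * n) (exp ℚ) := by
    intro t
    have := congrArg (rescale (n : ℚ)) (key t)
    simpa [map_mul, map_sub, map_one, rescale_rescale] using this
  have hne : (rescale (n : ℚ) (exp ℚ) - 1) * (exp ℚ - 1) ≠ 0 :=
    mul_ne_zero (rescale_exp_sub_one_ne_zero hn) exp_sub_one_ne_zero
  have hS : (∑ i ∈ Finset.range n, rescale (n : ℚ) (B ((i : ℚ) / n))) = (n : ℚ) • B 0 := by
    apply mul_right_cancel₀ hne
    calc (∑ i ∈ Finset.range n, rescale (n : ℚ) (B ((i : ℚ) / n)))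
          * ((rescale (n : ℚ) (exp ℚ) - 1) * (exp ℚ - 1))
        = (∑ i ∈ Finset.range n,
            rescale (n : ℚ) (B ((i : ℚ) / n)) * (rescale (n : ℚ) (exp ℚ) - 1)) * (exp ℚ - 1) := by
          simp [Finset.sum_mul, mul_assoc]
      _ = (∑ i ∈ Finset.range n,
            rescale (n : ℚ) X * rescale (i : ℚ) (exp ℚ)) * (exp ℚ - 1) := by
          congr 1
          refine Finset.sum_congr rfl fun i _ => ?_
          rw [h1, div_mul_cancel₀ _ hn0]
      _ = rescale (n : ℚ) X * ((∑ i ∈ Finset.range n, rescale (i : ℚ) (exp ℚ)) * (exp ℚ - 1)) := by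
          rw [← Finset.mul_sum]; ring
      _ = rescale (n : ℚ) X * (rescale (n : ℚ) (exp ℚ) - 1) := by rw [exp_telescope]
      _ = ((n : ℚ) • B 0) * ((rescale (n : ℚ) (exp ℚ) - 1) * (exp ℚ - 1)) := by
          have h0 : B 0 * (exp ℚ - 1) = X := by
            rw [key 0, rescale_zero]
            simp
          rw [show ((n : ℚ) • B 0) * ((rescale (n : ℚ) (exp ℚ) - 1) * (exp ℚ - 1))
              = (n : ℚ) • (B 0 * (exp ℚ - 1)) * (rescale (n : ℚ) (exp ℚ) - 1) by
            rw [smul_mul_assoc, smul_mul_assoc]; ring_nf, h0, rescale_nat_X, smul_mul_assoc]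
  have hc := congrArg (PowerSeries.coeff (R := ℚ) m) hS
  rw [map_sum] at hc
  simp only [coeff_rescale, PowerSeries.coeff_smul, hB, PowerSeries.coeff_mk,
    Polynomial.aeval_def, smul_eq_mul] at hc
  have hm0 : (m.factorial : ℚ) ≠ 0 := Nat.cast_ne_zero.mpr m.factorial_ne_zero
  have heval : ∀ t : ℚ, Polynomial.eval₂ (algebraMap ℚ ℚ) t ((1 / (m.factorial : ℚ)) • Polynomial.bernoulli m)
      = (1 / (m.factorial : ℚ)) * (Polynomial.bernoulli m).eval t := by
    intro t
    rw [Polynomial.eval₂_smul, Polynomial.eval₂_eq_eval_map]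
    simp
  simp only [heval] at hc
  have hc2 : (n : ℚ) ^ m * ((1 / (m.factorial : ℚ)) * ∑ i ∈ Finset.range n,
      (Polynomial.bernoulli m).eval ((i : ℚ) / n))
      = (n : ℚ) * ((1 / (m.factorial : ℚ)) * (Polynomial.bernoulli m).eval 0) := by
    rw [← hc, Finset.mul_sum, Finset.mul_sum]
  rw [Polynomial.bernoulli_eval_zero] at hc2
  field_simp at hc2
  linarith [hc2]

private lemma bernoulli_mult_real (m n : ℕ) (hn : 0 < n) :
    ∑ i ∈ Finset.range n,
        Polynomial.eval₂ (Rat.castHom ℝ) ((i : ℝ) / (n : ℝ)) (Polynomial.bernoulli m)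
      = (n : ℝ) * (_root_.bernoulli m : ℝ) / (n : ℝ) ^ m := by
  have hn0 : (n : ℚ) ≠ 0 := Nat.cast_ne_zero.mpr hn.ne'
  have hterm : ∀ i : ℕ,
      Polynomial.eval₂ (Rat.castHom ℝ) ((i : ℝ) / (n : ℝ)) (Polynomial.bernoulli m)
        = (((Polynomial.bernoulli m).eval ((i : ℚ) / (n : ℚ)) : ℚ) : ℝ) := by
    intro i
    have hp : ((i : ℝ) / (n : ℝ)) = ((((i : ℚ) / (n : ℚ)) : ℚ) : ℝ) := by push_cast; ring
    rw [hp]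
    exact Polynomial.eval₂_at_apply (Rat.castHom ℝ) _
  simp only [hterm]
  have key := bernoulli_mult m n hn
  have hnm : ((n : ℚ)) ^ m ≠ 0 := pow_ne_zero _ hn0
  have h3 : (∑ i ∈ Finset.range n, (Polynomial.bernoulli m).eval ((i : ℚ) / n))
      = (n : ℚ) * _root_.bernoulli m / (n : ℚ) ^ m := by
    field_simp
    linarith [key]
  push_cast [← Rat.cast_sum, h3]
  ring


/-- For arithmetical functions `f, g` and positive integers `s, m, k`:
`(1/k^s) ∑_{j=0}^{k^s−1} B_m(j/k^s) s_k^{(s)}(j)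
  = B_m · ∑_{dℓ = k} (f(d)/d^s)(g(ℓ)/ℓ^{ms})`,
where `B_m(x)` is the `m`-th Bernoulli polynomial and `B_m = B_m(0)`. -/
theorem bernoulli_weighted_average (f g : ℕ → ℝ) (s m k : ℕ)
    (hs : 0 < s) (hm : 0 < m) (hk : 0 < k) :
    (1 / (k : ℝ) ^ s) * ∑ j ∈ Finset.range (k ^ s),
        Polynomial.eval₂ (Rat.castHom ℝ) ((j : ℝ) / (k : ℝ) ^ s) (Polynomial.bernoulli m) *
          (∑ d ∈ k.divisors.filter (fun d => d ^ s ∣ j), f d * g (k / d))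
    = (bernoulli m : ℝ) *
        ∑ p ∈ k.divisorsAntidiagonal,
          (f p.1 / (p.1 : ℝ) ^ s) * (g p.2 / (p.2 : ℝ) ^ (m * s)) := by
  have hk0 : (k : ℝ) ≠ 0 := Nat.cast_ne_zero.mpr hk.ne'
  set A : ℕ → ℝ := fun j =>
    Polynomial.eval₂ (Rat.castHom ℝ) ((j : ℝ) / (k : ℝ) ^ s) (Polynomial.bernoulli m) with hA
  have hswap : ∑ j ∈ Finset.range (k ^ s),
      A j * (∑ d ∈ k.divisors.filter (fun d => d ^ s ∣ j), f d * g (k / d))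
      = ∑ d ∈ k.divisors, ∑ j ∈ (Finset.range (k ^ s)).filter (fun j => d ^ s ∣ j),
          A j * (f d * g (k / d)) := by
    simp_rw [Finset.mul_sum]
    refine Finset.sum_comm' ?_
    intro j d
    simp only [Finset.mem_filter, Finset.mem_range]
    tauto
  rw [hswap,
    Nat.sum_divisorsAntidiagonal (fun d e => (f d / (d : ℝ) ^ s) * (g e / (e : ℝ) ^ (m * s))),
    Finset.mul_sum, Finset.mul_sum]
  refine Finset.sum_congr rfl fun d hd => ?_
  obtain ⟨hdvd, -⟩ := Nat.mem_divisors.mp hd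
  have hd0 : 0 < d := Nat.pos_of_dvd_of_pos hdvd hk
  set e := k / d with he
  have hde : d * e = k := Nat.mul_div_cancel' hdvd
  have he0 : 0 < e := Nat.div_pos (Nat.le_of_dvd hk hdvd) hd0
  have hds0 : 0 < d ^ s := pow_pos hd0 s
  have hes0 : 0 < e ^ s := pow_pos he0 s
  have hdr0 : (d : ℝ) ≠ 0 := Nat.cast_ne_zero.mpr hd0.ne'
  have her0 : (e : ℝ) ≠ 0 := Nat.cast_ne_zero.mpr he0.ne'
  have hksr : (k : ℝ) ^ s = (d : ℝ) ^ s * (e : ℝ) ^ s := by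
    rw [← hde]; push_cast; ring
  have himg : (Finset.range (k ^ s)).filter (fun j => d ^ s ∣ j)
      = (Finset.range (e ^ s)).image (fun i => d ^ s * i) := by
    ext j
    simp only [Finset.mem_filter, Finset.mem_range, Finset.mem_image]
    constructor
    · rintro ⟨hjk, c, rfl⟩
      refine ⟨c, ?_, rfl⟩
      rw [← hde, mul_pow] at hjk
      exact lt_of_mul_lt_mul_left hjk (Nat.zero_le _)
    · rintro ⟨i, hi, rfl⟩
      refine ⟨?_, dvd_mul_right _ _⟩
      rw [← hde, mul_pow]
      exact mul_lt_mul_of_pos_left hi hds0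
  rw [himg, Finset.sum_image (fun a _ b _ h => Nat.eq_of_mul_eq_mul_left hds0 h)]
  have hpt : ∀ i : ℕ, A (d ^ s * i)
      = Polynomial.eval₂ (Rat.castHom ℝ) ((i : ℝ) / ((e ^ s : ℕ) : ℝ)) (Polynomial.bernoulli m) := by
    intro i
    rw [hA]
    congr 1
    push_cast [hksr]
    rw [mul_div_mul_left _ _ (pow_ne_zero _ hdr0)]
  simp_rw [hpt]
  rw [← Finset.sum_mul, bernoulli_mult_real m (e ^ s) hes0]
  push_cast [hksr]
  field_simp
  ring
end

section
/- The identity of arithmetical functions (φ_s * φ_s)/id_s = ((μ*μ)/id_s) * τ holds, i.e. for all n ≥ 1, (1/n^s) Σ_{d∣n} φ_s(d) φ_s(n/d) = Σ_{d∣n} ((μ*μ)(d)/d^s) τ(n/d). -/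
open Finset

/-- The Jordan totient function `φ_s = id_s * μ`. -/
noncomputable def jordanPhi (s n : ℕ) : ℝ :=
  ∑ p ∈ n.divisorsAntidiagonal, (p.1 : ℝ) ^ s * ((ArithmeticFunction.moebius p.2 : ℤ) : ℝ)

open ArithmeticFunction in
lemma jordanPhi_eq (s : ℕ) (hs : 1 ≤ s) (n : ℕ) :
    jordanPhi s n
      = (((pow s : ArithmeticFunction ℕ) : ArithmeticFunction ℝ) *
          ((moebius : ArithmeticFunction ℤ) : ArithmeticFunction ℝ)) n := by
  rw [mul_apply, jordanPhi]
  refine Finset.sum_congr rfl fun p hp => ?_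
  rw [natCoe_apply, intCoe_apply, pow_apply]
  have hs0 : s ≠ 0 := by omega
  simp [hs0]

open ArithmeticFunction in
lemma pow_mul_pow (s : ℕ) (n : ℕ) :
    ((((pow s : ArithmeticFunction ℕ) : ArithmeticFunction ℝ) *
        ((pow s : ArithmeticFunction ℕ) : ArithmeticFunction ℝ)) n)
      = (n : ℝ) ^ s * (n.divisors.card : ℝ) := by
  rw [mul_apply]
  have h : ∀ p ∈ n.divisorsAntidiagonal,
      (((pow s : ArithmeticFunction ℕ) : ArithmeticFunction ℝ) p.1) *
        (((pow s : ArithmeticFunction ℕ) : ArithmeticFunction ℝ) p.2) = (n : ℝ) ^ s := by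
    intro p hp
    obtain ⟨hmul, hn⟩ := Nat.mem_divisorsAntidiagonal.mp hp
    have h1 := Nat.left_ne_zero_of_mem_divisorsAntidiagonal hp
    have h2 := Nat.right_ne_zero_of_mem_divisorsAntidiagonal hp
    rw [natCoe_apply, natCoe_apply, pow_apply, pow_apply, if_neg (by tauto), if_neg (by tauto)]
    rw [← hmul]
    push_cast
    ring
  rw [Finset.sum_congr rfl h, Finset.sum_const, nsmul_eq_mul]
  have hcard : n.divisorsAntidiagonal.card = n.divisors.card := by
    rw [← Nat.image_fst_divisorsAntidiagonal]
    rw [Finset.card_image_of_injOn]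
    intro p hp q hq hfst
    obtain ⟨hp1, hp0⟩ := Nat.mem_divisorsAntidiagonal.mp hp
    obtain ⟨hq1, hq0⟩ := Nat.mem_divisorsAntidiagonal.mp hq
    have : p.1 ≠ 0 := Nat.left_ne_zero_of_mem_divisorsAntidiagonal hp
    ext
    · exact hfst
    · have := hq1 ▸ hp1
      rw [hfst] at this
      exact Nat.eq_of_mul_eq_mul_left (Nat.pos_of_ne_zero (hfst ▸ ‹p.1 ≠ 0›)) this
  rw [hcard]; ring

/-- `(φ_s * φ_s)/id_s = ((μ*μ)/id_s) * τ`: for all `n ≥ 1`,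
`(1/n^s) ∑_{d∣n} φ_s(d) φ_s(n/d) = ∑_{d∣n} ((μ*μ)(d)/d^s) τ(n/d)`. -/
theorem jordan_conv_identity (s : ℕ) (hs : 1 ≤ s) (n : ℕ) (hn : 1 ≤ n) :
    (1 / (n : ℝ) ^ s) * ∑ p ∈ n.divisorsAntidiagonal, jordanPhi s p.1 * jordanPhi s p.2
    = ∑ p ∈ n.divisorsAntidiagonal,
        ((∑ q ∈ p.1.divisorsAntidiagonal,
            ((ArithmeticFunction.moebius q.1 : ℤ) : ℝ) *
              ((ArithmeticFunction.moebius q.2 : ℤ) : ℝ)) / (p.1 : ℝ) ^ s) *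
          (p.2.divisors.card : ℝ) := by
  classical
  open ArithmeticFunction in
  set P : ArithmeticFunction ℝ := ((pow s : ArithmeticFunction ℕ) : ArithmeticFunction ℝ) with hP
  set M : ArithmeticFunction ℝ := ((moebius : ArithmeticFunction ℤ) : ArithmeticFunction ℝ) with hM
  have key : ∑ p ∈ n.divisorsAntidiagonal, jordanPhi s p.1 * jordanPhi s p.2
      = ((M * M) * (P * P)) n := by
    have : ∑ p ∈ n.divisorsAntidiagonal, jordanPhi s p.1 * jordanPhi s p.2
        = ((P * M) * (P * M)) n := by
      rw [ArithmeticFunction.mul_apply]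
      exact Finset.sum_congr rfl fun p hp => by
        rw [jordanPhi_eq s hs, jordanPhi_eq s hs]
    rw [this]
    ring_nf
  rw [key, ArithmeticFunction.mul_apply, Finset.mul_sum]
  refine Finset.sum_congr rfl fun p hp => ?_
  obtain ⟨hmul, hn0⟩ := Nat.mem_divisorsAntidiagonal.mp hp
  have h1 : (p.1 : ℝ) ≠ 0 := Nat.cast_ne_zero.mpr
    (Nat.left_ne_zero_of_mem_divisorsAntidiagonal hp)
  have h2 : (p.2 : ℝ) ≠ 0 := Nat.cast_ne_zero.mpr
    (Nat.right_ne_zero_of_mem_divisorsAntidiagonal hp)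
  have hMM : (M * M) p.1 = ∑ q ∈ p.1.divisorsAntidiagonal,
      ((ArithmeticFunction.moebius q.1 : ℤ) : ℝ) * ((ArithmeticFunction.moebius q.2 : ℤ) : ℝ) := by
    rw [ArithmeticFunction.mul_apply]
    exact Finset.sum_congr rfl fun q hq => by rw [hM]; simp
  rw [pow_mul_pow, hMM]
  have hns : (n : ℝ) ^ s = (p.1 : ℝ) ^ s * (p.2 : ℝ) ^ s := by
    rw [← hmul]; push_cast; ring
  rw [hns]
  field_simp
end

section
/- The identity of arithmetical functions (ψ_s * φ_s)/id_s = ((μ*|μ|)/id_s) * τ holds, i.e. for all n ≥ 1, (1/n^s) Σ_{d∣n} ψ_s(d) φ_s(n/d) = Σ_{d∣n} ((μ*|μ|)(d)/d^s) τ(n/d). -/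
open Finset

/-- The generalized Dedekind function `ψ_s = id_s * |μ|`. -/
noncomputable def dedekindPsi (s n : ℕ) : ℝ :=
  ∑ p ∈ n.divisorsAntidiagonal, (p.1 : ℝ) ^ s * |((ArithmeticFunction.moebius p.2 : ℤ) : ℝ)|

/-- `μ(n)/n^s` as an arithmetic function. -/
noncomputable def muTw (s : ℕ) : ArithmeticFunction ℝ :=
  ⟨fun n => ((ArithmeticFunction.moebius n : ℤ) : ℝ) / (n : ℝ) ^ s, by simp⟩

/-- `|μ(n)|/n^s` as an arithmetic function. -/
noncomputable def amuTw (s : ℕ) : ArithmeticFunction ℝ :=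
  ⟨fun n => |((ArithmeticFunction.moebius n : ℤ) : ℝ)| / (n : ℝ) ^ s, by simp⟩

/-- `ζ` over ℝ. -/
noncomputable def zR : ArithmeticFunction ℝ :=
  ((ArithmeticFunction.zeta : ArithmeticFunction ℕ) : ArithmeticFunction ℝ)

lemma zR_apply_ne {n : ℕ} (hn : n ≠ 0) : zR n = 1 := by
  simp [zR, ArithmeticFunction.natCoe_apply, ArithmeticFunction.zeta_apply, hn]

lemma cast_pow_mul {a b : ℕ} : ((a * b : ℕ) : ℝ) ^ s = (a : ℝ) ^ s * (b : ℝ) ^ s := by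
  push_cast; ring

lemma dedekindPsi_div {s a : ℕ} (ha : a ≠ 0) :
    dedekindPsi s a / (a : ℝ) ^ s = (zR * amuTw s) a := by
  rw [ArithmeticFunction.mul_apply, dedekindPsi, sum_div]
  refine Finset.sum_congr rfl fun p hp => ?_
  obtain ⟨hmul, h0⟩ := Nat.mem_divisorsAntidiagonal.mp hp
  have h1 : p.1 ≠ 0 := fun h => h0 (by simpa [h] using hmul.symm)
  have h2 : p.2 ≠ 0 := fun h => h0 (by simpa [h] using hmul.symm)
  rw [zR_apply_ne h1, ← hmul]
  show (p.1 : ℝ) ^ s * _ / ((p.1 * p.2 : ℕ) : ℝ) ^ s = 1 * (_ / (p.2 : ℝ) ^ s)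
  rw [cast_pow_mul]
  have hp1 : (p.1 : ℝ) ^ s ≠ 0 := pow_ne_zero _ (Nat.cast_ne_zero.mpr h1)
  field_simp

lemma jordanPhi_div {s a : ℕ} (ha : a ≠ 0) :
    jordanPhi s a / (a : ℝ) ^ s = (zR * muTw s) a := by
  rw [ArithmeticFunction.mul_apply, jordanPhi, sum_div]
  refine Finset.sum_congr rfl fun p hp => ?_
  obtain ⟨hmul, h0⟩ := Nat.mem_divisorsAntidiagonal.mp hp
  have h1 : p.1 ≠ 0 := fun h => h0 (by simpa [h] using hmul.symm)
  have h2 : p.2 ≠ 0 := fun h => h0 (by simpa [h] using hmul.symm)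
  rw [zR_apply_ne h1, ← hmul]
  show (p.1 : ℝ) ^ s * _ / ((p.1 * p.2 : ℕ) : ℝ) ^ s = 1 * (_ / (p.2 : ℝ) ^ s)
  rw [cast_pow_mul]
  have hp1 : (p.1 : ℝ) ^ s ≠ 0 := pow_ne_zero _ (Nat.cast_ne_zero.mpr h1)
  field_simp

/-- `(ψ_s * φ_s)/id_s = ((μ*|μ|)/id_s) * τ`: for all `n ≥ 1`,
`(1/n^s) ∑_{d∣n} ψ_s(d) φ_s(n/d) = ∑_{d∣n} ((μ*|μ|)(d)/d^s) τ(n/d)`. -/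
theorem dedekind_jordan_conv_identity (s : ℕ) (hs : 1 ≤ s) (n : ℕ) (hn : 1 ≤ n) :
    (1 / (n : ℝ) ^ s) * ∑ p ∈ n.divisorsAntidiagonal, dedekindPsi s p.1 * jordanPhi s p.2
    = ∑ p ∈ n.divisorsAntidiagonal,
        ((∑ q ∈ p.1.divisorsAntidiagonal,
            ((ArithmeticFunction.moebius q.1 : ℤ) : ℝ) *
              |((ArithmeticFunction.moebius q.2 : ℤ) : ℝ)|) / (p.1 : ℝ) ^ s) *
          (p.2.divisors.card : ℝ) := by
  have key : (zR * amuTw s) * (zR * muTw s) = (muTw s * amuTw s) * (zR * zR) := by ring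
  have lhs_eq :
      (1 / (n : ℝ) ^ s) * ∑ p ∈ n.divisorsAntidiagonal, dedekindPsi s p.1 * jordanPhi s p.2
        = ((zR * amuTw s) * (zR * muTw s)) n := by
    rw [ArithmeticFunction.mul_apply, Finset.mul_sum]
    refine Finset.sum_congr rfl fun p hp => ?_
    obtain ⟨hmul, h0⟩ := Nat.mem_divisorsAntidiagonal.mp hp
    have h1 : p.1 ≠ 0 := fun h => h0 (by simpa [h] using hmul.symm)
    have h2 : p.2 ≠ 0 := fun h => h0 (by simpa [h] using hmul.symm)
    rw [← dedekindPsi_div h1, ← jordanPhi_div h2, ← hmul, cast_pow_mul]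
    have hp1 : (p.1 : ℝ) ^ s ≠ 0 := pow_ne_zero _ (Nat.cast_ne_zero.mpr h1)
    have hp2 : (p.2 : ℝ) ^ s ≠ 0 := pow_ne_zero _ (Nat.cast_ne_zero.mpr h2)
    field_simp
  have rhs_eq :
      (∑ p ∈ n.divisorsAntidiagonal,
        ((∑ q ∈ p.1.divisorsAntidiagonal,
            ((ArithmeticFunction.moebius q.1 : ℤ) : ℝ) *
              |((ArithmeticFunction.moebius q.2 : ℤ) : ℝ)|) / (p.1 : ℝ) ^ s) *
          (p.2.divisors.card : ℝ))
        = ((muTw s * amuTw s) * (zR * zR)) n := by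
    rw [ArithmeticFunction.mul_apply]
    refine Finset.sum_congr rfl fun p hp => ?_
    obtain ⟨hmul, h0⟩ := Nat.mem_divisorsAntidiagonal.mp hp
    have h1 : p.1 ≠ 0 := fun h => h0 (by simpa [h] using hmul.symm)
    have h2 : p.2 ≠ 0 := fun h => h0 (by simpa [h] using hmul.symm)
    congr 1
    · rw [ArithmeticFunction.mul_apply, sum_div]
      refine Finset.sum_congr rfl fun q hq => ?_
      obtain ⟨hqmul, hq0⟩ := Nat.mem_divisorsAntidiagonal.mp hq
      have hq1 : q.1 ≠ 0 := fun h => hq0 (by simpa [h] using hqmul.symm)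
      have hq2 : q.2 ≠ 0 := fun h => hq0 (by simpa [h] using hqmul.symm)
      show _ / (p.1 : ℝ) ^ s = _ / (q.1 : ℝ) ^ s * (_ / (q.2 : ℝ) ^ s)
      rw [← hqmul, cast_pow_mul]
      have hk1 : (q.1 : ℝ) ^ s ≠ 0 := pow_ne_zero _ (Nat.cast_ne_zero.mpr hq1)
      have hk2 : (q.2 : ℝ) ^ s ≠ 0 := pow_ne_zero _ (Nat.cast_ne_zero.mpr hq2)
      field_simp
    · rw [ArithmeticFunction.mul_apply]
      have : ∀ q ∈ p.2.divisorsAntidiagonal, zR q.1 * zR q.2 = 1 := by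
        intro q hq
        obtain ⟨hqmul, hq0⟩ := Nat.mem_divisorsAntidiagonal.mp hq
        have hq1 : q.1 ≠ 0 := fun h => hq0 (by simpa [h] using hqmul.symm)
        have hq2 : q.2 ≠ 0 := fun h => hq0 (by simpa [h] using hqmul.symm)
        rw [zR_apply_ne hq1, zR_apply_ne hq2, mul_one]
      rw [Finset.sum_congr rfl this, Finset.sum_const, ← Nat.map_div_right_divisors, Finset.card_map]
      simp
  rw [lhs_eq, rhs_eq, key]
end

section
/- For real a and integers s, m with s ≥ 1, the identity ((φ_{s+a}*μ)/id_s) * (1/id_{2ms}) = ((μ*μ)/id_s) * (σ_{a+2ms}/id_{2ms}) holds as arithmetical functions. -/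
open Finset

/-- The Jordan totient with real index `c`: `φ_c = id_c * μ`. -/
noncomputable def jordanPhiR (c : ℝ) (n : ℕ) : ℝ :=
  ∑ p ∈ n.divisorsAntidiagonal, (p.1 : ℝ) ^ c * ((ArithmeticFunction.moebius p.2 : ℤ) : ℝ)

/-- The generalized divisor sum `σ_b = id_b * 1` with real index `b`. -/
noncomputable def sigmaR (b : ℝ) (n : ℕ) : ℝ :=
  ∑ d ∈ n.divisors, (d : ℝ) ^ b

noncomputable def dvR (f : ArithmeticFunction ℝ) (t : ℝ) : ArithmeticFunction ℝ :=
  ⟨fun n => f n * ((n : ℝ) ^ t)⁻¹, by simp⟩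

lemma dvR_apply (f : ArithmeticFunction ℝ) (t : ℝ) (n : ℕ) :
    dvR f t n = f n * ((n : ℝ) ^ t)⁻¹ := rfl

lemma dvR_mul (f g : ArithmeticFunction ℝ) (t : ℝ) :
    dvR (f * g) t = dvR f t * dvR g t := by
  ext n
  simp only [dvR_apply, ArithmeticFunction.mul_apply, Finset.sum_mul]
  refine Finset.sum_congr rfl fun p hp => ?_
  obtain ⟨hpn, hn0⟩ := Nat.mem_divisorsAntidiagonal.mp hp
  have h : ((p.1 * p.2 : ℕ) : ℝ) ^ t = (p.1 : ℝ) ^ t * (p.2 : ℝ) ^ t := by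
    push_cast
    exact Real.mul_rpow (Nat.cast_nonneg _) (Nat.cast_nonneg _)
  rw [← hpn, h, mul_inv]
  ring

noncomputable def DR (t : ℝ) : ArithmeticFunction ℝ :=
  ⟨fun n => if n = 0 then 0 else (n : ℝ) ^ t, by simp⟩

lemma DR_apply (t : ℝ) (n : ℕ) : DR t n = if n = 0 then 0 else (n : ℝ) ^ t := rfl

lemma dvR_DR (t u : ℝ) : dvR (DR t) u = DR (t - u) := by
  ext n
  rcases eq_or_ne n 0 with rfl | hn
  · simp [dvR_apply, DR_apply]
  · have hpos : (0 : ℝ) < (n : ℝ) := by positivity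
    simp only [dvR_apply, DR_apply, if_neg hn]
    rw [Real.rpow_sub hpos, div_eq_mul_inv]

noncomputable def UR : ArithmeticFunction ℝ :=
  ⟨fun n => if n = 0 then 0 else 1, by simp⟩

lemma UR_apply (n : ℕ) : UR n = if n = 0 then 0 else 1 := rfl

noncomputable def MR : ArithmeticFunction ℝ :=
  ((ArithmeticFunction.moebius : ArithmeticFunction ℤ) : ArithmeticFunction ℝ)

lemma MR_apply (n : ℕ) : MR n = ((ArithmeticFunction.moebius n : ℤ) : ℝ) := by
  simp [MR]

lemma jordan_eq (c : ℝ) (n : ℕ) : jordanPhiR c n = (DR c * MR) n := by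
  rw [jordanPhiR, ArithmeticFunction.mul_apply]
  refine Finset.sum_congr rfl fun p hp => ?_
  obtain ⟨hpn, hn0⟩ := Nat.mem_divisorsAntidiagonal.mp hp
  have h1 : p.1 ≠ 0 := by rintro h; apply hn0; rw [← hpn, h, zero_mul]
  rw [DR_apply, if_neg h1, MR_apply]

lemma conv_left (c : ℝ) (d : ℕ) :
    ((DR c * MR) * MR) d
      = ∑ q ∈ d.divisorsAntidiagonal,
          jordanPhiR c q.1 * ((ArithmeticFunction.moebius q.2 : ℤ) : ℝ) := by
  rw [ArithmeticFunction.mul_apply]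
  exact Finset.sum_congr rfl fun q _ => by rw [jordan_eq, MR_apply]

lemma conv_mm (d : ℕ) :
    (MR * MR) d
      = ∑ q ∈ d.divisorsAntidiagonal,
          ((ArithmeticFunction.moebius q.1 : ℤ) : ℝ) *
            ((ArithmeticFunction.moebius q.2 : ℤ) : ℝ) := by
  rw [ArithmeticFunction.mul_apply]
  exact Finset.sum_congr rfl fun q _ => by rw [MR_apply, MR_apply]

lemma sigma_eq (b : ℝ) (n : ℕ) : sigmaR b n = (DR b * UR) n := by
  rw [sigmaR, ArithmeticFunction.mul_apply, Nat.sum_divisorsAntidiagonal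
    (f := fun d e => DR b d * UR e)]
  refine Finset.sum_congr rfl fun d hd => ?_
  obtain ⟨hdn, hn0⟩ := Nat.mem_divisors.mp hd
  have hd0 : d ≠ 0 := fun h => hn0 (by simpa [h] using hdn)
  have hnd : n / d ≠ 0 := Nat.div_ne_zero_iff.mpr ⟨hd0, Nat.le_of_dvd (Nat.pos_of_ne_zero hn0) hdn⟩
  rw [DR_apply, if_neg hd0, UR_apply, if_neg hnd, mul_one]

/-- For real `a` and integers `s, m` with `s ≥ 1`:
`((φ_{s+a}*μ)/id_s) * (1/id_{2ms}) = ((μ*μ)/id_s) * (σ_{a+2ms}/id_{2ms})`. -/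
theorem phi_sa_conv_identity (a : ℝ) (s m : ℕ) (hs : 1 ≤ s) (n : ℕ) (hn : 1 ≤ n) :
    ∑ p ∈ n.divisorsAntidiagonal,
        ((∑ q ∈ p.1.divisorsAntidiagonal,
            jordanPhiR ((s : ℝ) + a) q.1 * ((ArithmeticFunction.moebius q.2 : ℤ) : ℝ)) /
          (p.1 : ℝ) ^ s) * (1 / (p.2 : ℝ) ^ (2 * m * s))
    = ∑ p ∈ n.divisorsAntidiagonal,
        ((∑ q ∈ p.1.divisorsAntidiagonal,
            ((ArithmeticFunction.moebius q.1 : ℤ) : ℝ) *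
              ((ArithmeticFunction.moebius q.2 : ℤ) : ℝ)) / (p.1 : ℝ) ^ s) *
          (sigmaR (a + 2 * m * s) p.2 / (p.2 : ℝ) ^ (2 * m * s)) := by
  set c : ℝ := (s : ℝ) + a with hc
  set k : ℕ := 2 * m * s with hk
  set b : ℝ := a + 2 * m * s with hb
  have key : dvR ((DR c * MR) * MR) (s : ℝ) * dvR UR (k : ℝ)
      = dvR (MR * MR) (s : ℝ) * dvR (DR b * UR) (k : ℝ) := by
    rw [dvR_mul, dvR_mul, dvR_mul, dvR_mul, dvR_DR, dvR_DR]
    have h1 : c - (s : ℝ) = a := by rw [hc]; ring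
    have h2 : b - (k : ℝ) = a := by rw [hb, hk]; push_cast; ring
    rw [h1, h2]
    ring
  have LHS : ∑ p ∈ n.divisorsAntidiagonal,
        ((∑ q ∈ p.1.divisorsAntidiagonal,
            jordanPhiR c q.1 * ((ArithmeticFunction.moebius q.2 : ℤ) : ℝ)) /
          (p.1 : ℝ) ^ s) * (1 / (p.2 : ℝ) ^ k)
      = (dvR ((DR c * MR) * MR) (s : ℝ) * dvR UR (k : ℝ)) n := by
    rw [ArithmeticFunction.mul_apply]
    refine Finset.sum_congr rfl fun p hp => ?_
    obtain ⟨hpn, hn0⟩ := Nat.mem_divisorsAntidiagonal.mp hp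
    have h2 : p.2 ≠ 0 := by rintro h; apply hn0; rw [← hpn, h, mul_zero]
    rw [dvR_apply, dvR_apply, conv_left, UR_apply, if_neg h2,
      Real.rpow_natCast, Real.rpow_natCast, div_eq_mul_inv, one_mul, one_div]
  have RHS : ∑ p ∈ n.divisorsAntidiagonal,
        ((∑ q ∈ p.1.divisorsAntidiagonal,
            ((ArithmeticFunction.moebius q.1 : ℤ) : ℝ) *
              ((ArithmeticFunction.moebius q.2 : ℤ) : ℝ)) / (p.1 : ℝ) ^ s) *
          (sigmaR b p.2 / (p.2 : ℝ) ^ k)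
      = (dvR (MR * MR) (s : ℝ) * dvR (DR b * UR) (k : ℝ)) n := by
    rw [ArithmeticFunction.mul_apply]
    refine Finset.sum_congr rfl fun p hp => ?_
    rw [dvR_apply, dvR_apply, conv_mm, sigma_eq,
      Real.rpow_natCast, Real.rpow_natCast, div_eq_mul_inv, div_eq_mul_inv]
  rw [LHS, RHS, key]
end

section
/- For sufficiently large real x > 1 and fixed integer s ≥ 2: Σ_{n ≤ x} ψ_s(n)/n^s = (ζ(s+1)/ζ(2s+2)) x − Σ_{d ≤ x} (|μ(d)|/d^s) ϑ(x/d) − ζ(s)/(2ζ(2s)) + O_s(x^{1−s}), where ϑ(y) = y − ⌊y⌋ − 1/2. -/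
open Finset Filter

/-- `ϑ(y) = y − ⌊y⌋ − 1/2`. -/
noncomputable def vartheta (y : ℝ) : ℝ := y - ⌊y⌋ - 1 / 2

noncomputable def qf (n : ℕ) : ℝ := |((ArithmeticFunction.moebius n : ℤ) : ℝ)|

lemma qf_nonneg (n : ℕ) : 0 ≤ qf n := abs_nonneg _
lemma qf_le_one (n : ℕ) : qf n ≤ 1 := by
  have := ArithmeticFunction.abs_moebius_le_one (n := n)
  unfold qf
  rw [← Int.cast_abs]
  exact_mod_cast this
lemma qf_zero : qf 0 = 0 := by simp [qf]
lemma qf_eq_one {n : ℕ} (h : Squarefree n) : qf n = 1 := by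
  unfold qf
  rw [← Int.cast_abs, ArithmeticFunction.abs_moebius_eq_one_of_squarefree h]
  norm_num
lemma qf_ne_zero_iff {n : ℕ} : qf n ≠ 0 ↔ Squarefree n := by
  unfold qf
  simp [ArithmeticFunction.moebius_ne_zero_iff_squarefree]

lemma sqfree_decomp_unique {a₁ b₁ a₂ b₂ : ℕ} (h₁ : Squarefree a₁) (h₂ : Squarefree a₂)
    (hb₁ : 0 < b₁) (hb₂ : 0 < b₂) (h : a₁ * b₁ ^ 2 = a₂ * b₂ ^ 2) : a₁ = a₂ ∧ b₁ = b₂ := by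
  have ha₁ := h₁.ne_zero
  have ha₂ := h₂.ne_zero
  have hfac : ∀ p : ℕ, a₁.factorization p = a₂.factorization p ∧
      b₁.factorization p = b₂.factorization p := by
    intro p
    have := congrArg (fun m => m.factorization p) h
    simp only [Nat.factorization_mul ha₁ (pow_ne_zero 2 hb₁.ne'),
      Nat.factorization_mul ha₂ (pow_ne_zero 2 hb₂.ne'), Nat.factorization_pow,
      Finsupp.add_apply, Finsupp.smul_apply, smul_eq_mul] at this
    have u₁ := h₁.natFactorization_le_one p
    have u₂ := h₂.natFactorization_le_one p
    omega
  constructor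
  · exact Nat.factorization_inj ha₁ ha₂ (Finsupp.ext fun p => (hfac p).1)
  · exact Nat.factorization_inj hb₁.ne' hb₂.ne' (Finsupp.ext fun p => (hfac p).2)

lemma summable_P {t : ℕ} (ht : 2 ≤ t) : Summable (fun n : ℕ => 1 / (n : ℝ) ^ t) :=
  Real.summable_one_div_nat_pow.2 (by omega)

lemma summable_Q {t : ℕ} (ht : 2 ≤ t) : Summable (fun n : ℕ => qf n / (n : ℝ) ^ t) := by
  refine Summable.of_nonneg_of_le (fun n => by have := qf_nonneg n; positivity)
    (fun n => ?_) (summable_P ht)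
  calc qf n / (n : ℝ) ^ t = qf n * (1 / (n : ℝ) ^ t) := by ring
    _ ≤ 1 * (1 / (n : ℝ) ^ t) :=
        mul_le_mul_of_nonneg_right (qf_le_one n) (by positivity)
    _ = 1 / (n : ℝ) ^ t := one_mul _

lemma P_eq_Q_mul_P {t : ℕ} (ht : 2 ≤ t) :
    (∑' n : ℕ, 1 / (n : ℝ) ^ t) =
      (∑' n : ℕ, qf n / (n : ℝ) ^ t) * ∑' n : ℕ, 1 / (n : ℝ) ^ (2 * t) := by
  have h2t : 2 ≤ 2 * t := by omega
  have h1 : Summable fun n : ℕ => ‖qf n / (n : ℝ) ^ t‖ :=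
    (summable_Q ht).congr fun n => by
      rw [Real.norm_eq_abs, abs_of_nonneg (by have := qf_nonneg n; positivity)]
  have h2 : Summable fun n : ℕ => ‖1 / (n : ℝ) ^ (2 * t)‖ :=
    (summable_P h2t).congr fun n => by
      rw [Real.norm_eq_abs, abs_of_nonneg (by positivity)]
  rw [tsum_mul_tsum_of_summable_norm h1 h2]
  refine tsum_eq_tsum_of_ne_zero_bij (fun z => z.1.1 * z.1.2 ^ 2) ?_ ?_ ?_
  · rintro ⟨⟨a₁, b₁⟩, h₁⟩ ⟨⟨a₂, b₂⟩, h₂⟩ h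
    simp only [Function.mem_support, ne_eq] at h₁ h₂
    have hq₁ : qf a₁ ≠ 0 := by intro hz; apply h₁; simp [hz]
    have hq₂ : qf a₂ ≠ 0 := by intro hz; apply h₂; simp [hz]
    have hb₁ : b₁ ≠ 0 := by
      intro hz; apply h₁; subst hz; simp; exact Or.inr (by omega)
    have hb₂ : b₂ ≠ 0 := by
      intro hz; apply h₂; subst hz; simp; exact Or.inr (by omega)
    have := sqfree_decomp_unique (qf_ne_zero_iff.1 hq₁) (qf_ne_zero_iff.1 hq₂)
      (Nat.pos_of_ne_zero hb₁) (Nat.pos_of_ne_zero hb₂) h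
    simp only [Subtype.ext_iff, Prod.ext_iff]
    exact ⟨this.1, this.2⟩
  · intro n hn
    simp only [Function.mem_support, ne_eq] at hn
    have hn0 : 0 < n := by
      rcases Nat.eq_zero_or_pos n with h | h
      · exfalso; apply hn; subst h; simp; omega
      · exact h
    obtain ⟨a, b, ha, hb, hab, hsq⟩ := Nat.sq_mul_squarefree_of_pos hn0
    have hmem : (a, b) ∈ Function.support
        (fun z : ℕ × ℕ => qf z.1 / (z.1 : ℝ) ^ t * (1 / (z.2 : ℝ) ^ (2 * t))) := by
      simp only [Function.mem_support, ne_eq]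
      rw [qf_eq_one hsq]
      have : (0:ℝ) < a := by exact_mod_cast ha
      have : (0:ℝ) < b := by exact_mod_cast hb
      positivity
    exact ⟨⟨(a, b), hmem⟩, by simp only [Set.mem_range]; rw [mul_comm]; exact hab⟩
  · rintro ⟨⟨a, b⟩, h⟩
    simp only [Function.mem_support, ne_eq] at h
    have hq : qf a ≠ 0 := by intro hz; apply h; simp [hz]
    have hb : (b:ℝ) ≠ 0 := by
      intro hz; apply h; rw [hz]; simp; exact Or.inr (by omega)
    have ha : (a:ℝ) ≠ 0 := by
      have := (qf_ne_zero_iff.1 hq).ne_zero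
      exact_mod_cast this
    rw [qf_eq_one (qf_ne_zero_iff.1 hq)]
    push_cast
    rw [mul_pow, ← pow_mul, mul_comm 2 t]
    field_simp

lemma zeta_nat_ofReal {t : ℕ} (ht : 2 ≤ t) :
    riemannZeta (t : ℂ) = ((∑' n : ℕ, 1 / (n : ℝ) ^ t : ℝ) : ℂ) := by
  rw [zeta_nat_eq_tsum_of_gt_one (by omega : 1 < t), Complex.ofReal_tsum]
  congr 1
  ext n
  push_cast
  rfl

lemma zeta_ratio {t : ℕ} (ht : 2 ≤ t) :
    riemannZeta (t : ℂ) / riemannZeta ((2 * t : ℕ) : ℂ) =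
      ((∑' n : ℕ, qf n / (n : ℝ) ^ t : ℝ) : ℂ) := by
  have h2t : 2 ≤ 2 * t := by omega
  have hne : riemannZeta ((2 * t : ℕ) : ℂ) ≠ 0 := by
    apply riemannZeta_ne_zero_of_one_lt_re
    simp only [Complex.natCast_re]
    exact_mod_cast (by omega : 1 < 2 * t)
  have h1 := zeta_nat_ofReal ht
  have h2 := zeta_nat_ofReal h2t
  have hPne : ((∑' n : ℕ, 1 / (n : ℝ) ^ (2 * t) : ℝ) : ℂ) ≠ 0 := h2 ▸ hne
  rw [h1, h2, P_eq_Q_mul_P ht]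
  rw [Complex.ofReal_mul]
  rw [mul_div_assoc, div_self hPne, mul_one]

lemma psi_term {s n : ℕ} (hn : 0 < n) :
    dedekindPsi s n / (n : ℝ) ^ s = ∑ i ∈ n.divisors, qf i / (i : ℝ) ^ s := by
  rw [dedekindPsi, Finset.sum_div]
  rw [← Nat.sum_divisorsAntidiagonal' (f := fun i j => qf j / (j : ℝ) ^ s)]
  refine Finset.sum_congr rfl fun p hp => ?_
  obtain ⟨hmul, hne⟩ := Nat.mem_divisorsAntidiagonal.mp hp
  have h1 : p.1 ≠ 0 := by intro h; rw [h, zero_mul] at hmul; omega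
  have h2 : p.2 ≠ 0 := by intro h; rw [h, mul_zero] at hmul; omega
  have hn' : (n : ℝ) ^ s = (p.1 : ℝ) ^ s * (p.2 : ℝ) ^ s := by
    rw [← hmul]; push_cast; rw [mul_pow]
  rw [hn', qf]
  have hp1 : ((p.1 : ℝ)) ^ s ≠ 0 := pow_ne_zero _ (Nat.cast_ne_zero.mpr h1)
  field_simp

lemma sum_psi (s N : ℕ) :
    ∑ n ∈ Finset.Icc 1 N, dedekindPsi s n / (n : ℝ) ^ s =
      ∑ d ∈ Finset.Icc 1 N, qf d / (d : ℝ) ^ s * ((N / d : ℕ) : ℝ) := by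
  have step1 : ∑ n ∈ Finset.Icc 1 N, dedekindPsi s n / (n : ℝ) ^ s =
      ∑ n ∈ Finset.Icc 1 N, ∑ i ∈ n.divisors, qf i / (i : ℝ) ^ s := by
    refine Finset.sum_congr rfl fun n hn => ?_
    exact psi_term (by simp [Finset.mem_Icc] at hn; omega)
  rw [step1]
  have step2 : ∀ n ∈ Finset.Icc 1 N, ∑ i ∈ n.divisors, qf i / (i : ℝ) ^ s =
      ∑ d ∈ Finset.Icc 1 N, if d ∣ n then qf d / (d : ℝ) ^ s else 0 := by
    intro n hn
    rw [Finset.mem_Icc] at hn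
    rw [← Finset.sum_filter]
    congr 1
    ext d
    simp only [Nat.mem_divisors, Finset.mem_filter, Finset.mem_Icc]
    constructor
    · rintro ⟨hd, hne⟩
      exact ⟨⟨Nat.pos_of_dvd_of_pos hd (by omega), (Nat.le_of_dvd (by omega) hd).trans hn.2⟩, hd⟩
    · rintro ⟨_, hd⟩
      exact ⟨hd, by omega⟩
  rw [Finset.sum_congr rfl step2, Finset.sum_comm]
  refine Finset.sum_congr rfl fun d hd => ?_
  rw [← Finset.sum_filter]
  rw [Finset.sum_const]
  have hcard : (Finset.filter (fun n => d ∣ n) (Finset.Icc 1 N)).card = N / d := by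
    have : Finset.Icc 1 N = Finset.Ioc 0 N := rfl
    rw [this, Nat.Ioc_filter_dvd_card_eq_div]
  rw [hcard, nsmul_eq_mul, mul_comm]

lemma tail_bound {t N : ℕ} (ht : 2 ≤ t) (hN : 1 ≤ N) :
    0 ≤ (∑' n : ℕ, qf n / (n : ℝ) ^ t) - ∑ d ∈ Finset.Icc 1 N, qf d / (d : ℝ) ^ t ∧
      (∑' n : ℕ, qf n / (n : ℝ) ^ t) - ∑ d ∈ Finset.Icc 1 N, qf d / (d : ℝ) ^ t
        ≤ ((N : ℝ) ^ (t - 1))⁻¹ := by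
  have hsum := summable_Q ht
  have hpart : ∑ d ∈ Finset.Icc 1 N, qf d / (d : ℝ) ^ t
      = ∑ i ∈ Finset.range (N + 1), qf i / (i : ℝ) ^ t := by
    have hins : Finset.range (N + 1) = insert 0 (Finset.Icc 1 N) := by
      ext k; simp [Nat.lt_succ_iff, Finset.mem_Icc]; omega
    rw [hins, Finset.sum_insert (by simp)]
    simp [qf_zero]
  have key := Summable.sum_add_tsum_nat_add (N + 1) hsum
  have htail : (∑' n : ℕ, qf n / (n : ℝ) ^ t) - ∑ d ∈ Finset.Icc 1 N, qf d / (d : ℝ) ^ t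
      = ∑' i : ℕ, qf (i + (N + 1)) / ((i + (N + 1) : ℕ) : ℝ) ^ t := by
    rw [hpart, ← key]; ring
  rw [htail]
  constructor
  · exact tsum_nonneg fun i => by have := qf_nonneg (i + (N + 1)); positivity
  · refine Real.tsum_le_of_sum_range_le
      (fun i => by have := qf_nonneg (i + (N + 1)); positivity) fun M => ?_
    have hre : ∑ i ∈ Finset.range M, qf (i + (N + 1)) / ((i + (N + 1) : ℕ) : ℝ) ^ t
        = ∑ k ∈ Finset.Ioc N (N + M), qf k / (k : ℝ) ^ t := by
      rw [← Finset.Ico_add_one_add_one_eq_Ioc, Finset.sum_Ico_eq_sum_range]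
      have : N + M + 1 - (N + 1) = M := by omega
      rw [this]
      exact Finset.sum_congr rfl fun i _ => by rw [Nat.add_comm (N + 1) i]
    rw [hre]
    have hNR : (0:ℝ) < (N : ℝ) := by exact_mod_cast hN
    calc ∑ k ∈ Finset.Ioc N (N + M), qf k / (k : ℝ) ^ t
        ≤ ∑ k ∈ Finset.Ioc N (N + M), ((N : ℝ) ^ (t - 2))⁻¹ * ((k : ℝ) ^ 2)⁻¹ := by
          refine Finset.sum_le_sum fun k hk => ?_
          rw [Finset.mem_Ioc] at hk
          have hkN : (N : ℝ) ≤ (k : ℝ) := by exact_mod_cast hk.1.le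
          have hk0 : (0:ℝ) < (k : ℝ) := lt_of_lt_of_le hNR hkN
          have hkt : (k : ℝ) ^ t = (k : ℝ) ^ 2 * (k : ℝ) ^ (t - 2) := by
            rw [← pow_add]; congr 1; omega
          calc qf k / (k : ℝ) ^ t ≤ 1 / (k : ℝ) ^ t := by
                gcongr
                exact qf_le_one k
            _ = ((k : ℝ) ^ 2)⁻¹ * ((k : ℝ) ^ (t - 2))⁻¹ := by
                rw [hkt, one_div, mul_inv]
            _ ≤ ((k : ℝ) ^ 2)⁻¹ * ((N : ℝ) ^ (t - 2))⁻¹ := by gcongr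
            _ = ((N : ℝ) ^ (t - 2))⁻¹ * ((k : ℝ) ^ 2)⁻¹ := mul_comm _ _
      _ = ((N : ℝ) ^ (t - 2))⁻¹ * ∑ k ∈ Finset.Ioc N (N + M), ((k : ℝ) ^ 2)⁻¹ := by
          rw [Finset.mul_sum]
      _ ≤ ((N : ℝ) ^ (t - 2))⁻¹ * (N : ℝ)⁻¹ := by
          gcongr
          calc (∑ k ∈ Finset.Ioc N (N + M), ((k : ℝ) ^ 2)⁻¹)
              ≤ (N : ℝ)⁻¹ - ((N + M : ℕ) : ℝ)⁻¹ :=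
                sum_Ioc_inv_sq_le_sub (by omega) (by omega)
            _ ≤ (N : ℝ)⁻¹ := by
                have : (0:ℝ) ≤ ((N + M : ℕ) : ℝ)⁻¹ := by positivity
                linarith
      _ = ((N : ℝ) ^ (t - 1))⁻¹ := by
          rw [← mul_inv, ← pow_succ]
          congr 2
          omega

/-- For fixed `s ≥ 2`, as `x → ∞`:
`∑_{n ≤ x} ψ_s(n)/n^s = (ζ(s+1)/ζ(2s+2)) x − ∑_{d ≤ x} (|μ(d)|/d^s) ϑ(x/d)
  − ζ(s)/(2ζ(2s)) + O_s(x^{1−s})`. -/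
theorem dedekind_psi_partial_sum (s : ℕ) (hs : 2 ≤ s) :
    (fun x : ℝ =>
        ((∑ n ∈ Finset.Icc 1 ⌊x⌋₊, dedekindPsi s n / (n : ℝ) ^ s : ℝ) : ℂ)
          - riemannZeta ((s : ℂ) + 1) / riemannZeta (2 * (s : ℂ) + 2) * (x : ℂ)
          + ((∑ d ∈ Finset.Icc 1 ⌊x⌋₊,
              |((ArithmeticFunction.moebius d : ℤ) : ℝ)| / (d : ℝ) ^ s *
                vartheta (x / (d : ℝ)) : ℝ) : ℂ)
          + riemannZeta (s : ℂ) / (2 * riemannZeta (2 * (s : ℂ))))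
      =O[atTop] fun x : ℝ => x ^ ((1 : ℝ) - s) := by
  rw [Asymptotics.isBigO_iff]
  refine ⟨2 ^ s * 2, ?_⟩
  filter_upwards [eventually_ge_atTop (2 : ℝ)] with x hx
  have hx0 : (0 : ℝ) < x := by linarith
  set N := ⌊x⌋₊ with hNdef
  have hN1 : 1 ≤ N := Nat.le_floor (by exact_mod_cast (by linarith : (1:ℝ) ≤ x))
  have hNx : (N : ℝ) ≤ x := Nat.floor_le hx0.le
  have hxN : x / 2 ≤ (N : ℝ) := by
    have := Nat.sub_one_lt_floor x
    simp only [← hNdef] at this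
    linarith
  have hNR : (0 : ℝ) < (N : ℝ) := by exact_mod_cast hN1
  -- notation
  set Qs : ℝ := ∑' n : ℕ, qf n / (n : ℝ) ^ s with hQs
  set Qs1 : ℝ := ∑' n : ℕ, qf n / (n : ℝ) ^ (s + 1) with hQs1
  set As : ℝ := ∑ d ∈ Finset.Icc 1 N, qf d / (d : ℝ) ^ s with hAs
  set As1 : ℝ := ∑ d ∈ Finset.Icc 1 N, qf d / (d : ℝ) ^ (s + 1) with hAs1
  set S2 : ℝ := ∑ d ∈ Finset.Icc 1 N,
      |((ArithmeticFunction.moebius d : ℤ) : ℝ)| / (d : ℝ) ^ s * vartheta (x / (d : ℝ)) with hS2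
  -- zeta rewrites
  have e1 : (s : ℂ) + 1 = (((s + 1 : ℕ)) : ℂ) := by push_cast; ring
  have e2 : 2 * (s : ℂ) + 2 = (((2 * (s + 1) : ℕ)) : ℂ) := by push_cast; ring
  have e3 : 2 * (s : ℂ) = (((2 * s : ℕ)) : ℂ) := by push_cast; ring
  rw [e1, e2, e3, zeta_ratio (by omega : 2 ≤ s + 1),
    div_mul_eq_div_div_swap, zeta_ratio hs]
  -- real identity for S1
  have hS1 : ∑ n ∈ Finset.Icc 1 N, dedekindPsi s n / (n : ℝ) ^ s
      = x * As1 - S2 - As / 2 := by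
    rw [sum_psi s N, hAs1, hAs, hS2, Finset.mul_sum, Finset.sum_div, ← Finset.sum_sub_distrib,
      ← Finset.sum_sub_distrib]
    refine Finset.sum_congr rfl fun d hd => ?_
    rw [Finset.mem_Icc] at hd
    have hd0 : (0 : ℝ) < (d : ℝ) := by exact_mod_cast hd.1
    have hfl : ((N / d : ℕ) : ℝ) = x / d - vartheta (x / d) - 1 / 2 := by
      rw [hNdef, ← Nat.floor_div_natCast x d, natCast_floor_eq_intCast_floor (by positivity),
        vartheta]
      ring
    rw [hfl]
    have hq : |((ArithmeticFunction.moebius d : ℤ) : ℝ)| = qf d := rfl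
    rw [hq]
    have hpow : (d : ℝ) ^ (s + 1) = (d : ℝ) ^ s * d := pow_succ _ _
    field_simp
    ring
  -- the expression is real
  have hexpr : ((∑ n ∈ Finset.Icc 1 N, dedekindPsi s n / (n : ℝ) ^ s : ℝ) : ℂ)
      - ((Qs1 : ℝ) : ℂ) * (x : ℂ) + ((S2 : ℝ) : ℂ) + ((Qs : ℝ) : ℂ) / 2
      = (((-(x * (Qs1 - As1)) + (Qs - As) / 2 : ℝ)) : ℂ) := by
    rw [hS1]
    push_cast
    ring
  rw [hexpr, Complex.norm_real]
  -- tail bounds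
  obtain ⟨ht1a, ht1b⟩ := tail_bound (t := s + 1) (N := N) (by omega) hN1
  obtain ⟨ht2a, ht2b⟩ := tail_bound (t := s) (N := N) hs hN1
  rw [← hQs1, ← hAs1] at ht1a ht1b
  rw [← hQs, ← hAs] at ht2a ht2b
  have hts : s + 1 - 1 = s := by omega
  rw [hts] at ht1b
  have habs : ‖-(x * (Qs1 - As1)) + (Qs - As) / 2‖
      ≤ x * ((N : ℝ) ^ s)⁻¹ + ((N : ℝ) ^ (s - 1))⁻¹ / 2 := by
    rw [Real.norm_eq_abs]
    have h1 : x * (Qs1 - As1) ≤ x * ((N : ℝ) ^ s)⁻¹ := by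
      apply mul_le_mul_of_nonneg_left ht1b hx0.le
    have h2 : 0 ≤ x * (Qs1 - As1) := mul_nonneg hx0.le ht1a
    have h3 : (Qs - As) / 2 ≤ ((N : ℝ) ^ (s - 1))⁻¹ / 2 := by linarith
    have h4 : 0 ≤ (Qs - As) / 2 := by linarith
    rw [abs_le]
    constructor <;> nlinarith [inv_nonneg.mpr (pow_nonneg hNR.le s),
      inv_nonneg.mpr (pow_nonneg hNR.le (s - 1))]
  refine habs.trans ?_
  -- final computation
  have hrpow : ‖x ^ ((1 : ℝ) - s)‖ = x / x ^ s := by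
    rw [Real.norm_eq_abs, abs_of_pos (Real.rpow_pos_of_pos hx0 _),
      Real.rpow_sub hx0, Real.rpow_one, Real.rpow_natCast]
  rw [hrpow]
  have hhalf : (0 : ℝ) < x / 2 := by linarith
  have hb1 : ((N : ℝ) ^ s)⁻¹ ≤ ((x / 2) ^ s)⁻¹ := by gcongr
  have hb2 : ((N : ℝ) ^ (s - 1))⁻¹ ≤ ((x / 2) ^ (s - 1))⁻¹ := by gcongr
  have hxs1 : x ^ (s - 1) * x = x ^ s := by
    rw [← pow_succ]; congr 1; omega
  have he1 : x * ((x / 2) ^ s)⁻¹ = 2 ^ s / x ^ (s - 1) := by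
    rw [div_pow, inv_div]
    rw [eq_div_iff (by positivity)]
    field_simp
    rw [← hxs1]
    ring
  have he2 : ((x / 2) ^ (s - 1))⁻¹ = 2 ^ (s - 1) / x ^ (s - 1) := by
    rw [div_pow, inv_div]
  have he3 : 2 ^ s * 2 * (x / x ^ s) = 2 ^ s * 2 / x ^ (s - 1) := by
    rw [← hxs1]
    field_simp
  calc x * ((N : ℝ) ^ s)⁻¹ + ((N : ℝ) ^ (s - 1))⁻¹ / 2
      ≤ x * ((x / 2) ^ s)⁻¹ + ((x / 2) ^ (s - 1))⁻¹ / 2 := by gcongr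
    _ = 2 ^ s / x ^ (s - 1) + (2 ^ (s - 1) / x ^ (s - 1)) / 2 := by rw [he1, he2]
    _ ≤ 2 ^ s * 2 / x ^ (s - 1) := by
        have h2s : (2 : ℝ) ^ (s - 1) ≤ 2 ^ s := by
          apply pow_le_pow_right₀ one_le_two
          omega
        have hcomb : 2 ^ s / x ^ (s - 1) + 2 ^ (s - 1) / x ^ (s - 1) / 2
            = (2 ^ s + 2 ^ (s - 1) / 2) / x ^ (s - 1) := by ring
        rw [hcomb]
        gcongr
        have hp : (0:ℝ) ≤ 2 ^ (s - 1) := by positivity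
        linarith
    _ = 2 ^ s * 2 * (x / x ^ s) := he3.symm
end

section
/- For fixed integer s ≥ 2 and x ≥ 1: Σ_{d ≤ x} ((μ*μ)(d)/d^{s+1}) log d = 2 ζ'(s+1)/ζ(s+1)^3 + O_s(x^{−s} (log x)^2). -/
open Finset Filter

namespace MoebiusSqAux

open Real

/-- Step inequality for telescoping tail bounds. -/
lemma step_ineq (k : ℕ) (hk : 1 ≤ k) (c : ℝ) (hc : 0 ≤ c) (n : ℕ) (hn : 1 ≤ n) :
    (Real.log (n + 1) + c) / ((n : ℝ) + 1) ^ (k + 1) ≤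
      (Real.log n + c + 2) / (n : ℝ) ^ k - (Real.log (n + 1) + c + 2) / ((n : ℝ) + 1) ^ k := by
  obtain ⟨k', rfl⟩ : ∃ k', k = k' + 1 := ⟨k - 1, (Nat.succ_pred_eq_of_pos hk).symm⟩
  have hn0 : (1:ℝ) ≤ (n:ℝ) := by exact_mod_cast hn
  set g : ℝ → ℝ := fun u => (Real.log u + c + 2) / u ^ (k' + 1) with hg
  have hderiv : ∀ u ∈ Set.Ioo (n:ℝ) ((n:ℝ)+1), HasDerivAt g
      ((u⁻¹ * u ^ (k'+1) - (Real.log u + c + 2) * ((k'+1) * u ^ k')) / (u ^ (k'+1)) ^ 2) u := by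
    intro u hu
    have hu0 : (0:ℝ) < u := lt_of_lt_of_le (by linarith) hu.1.le
    have h1 : HasDerivAt (fun u : ℝ => Real.log u + c + 2) u⁻¹ u :=
      ((Real.hasDerivAt_log hu0.ne').add_const c).add_const 2
    have h2 : HasDerivAt (fun u : ℝ => u ^ (k'+1)) (((k'+1 : ℕ) : ℝ) * u ^ k') u := by
      simpa using hasDerivAt_pow (k'+1) u
    exact h1.div (by exact_mod_cast h2) (pow_ne_zero _ hu0.ne')
  have hsub : Set.Icc (n:ℝ) ((n:ℝ)+1) ⊆ {0}ᶜ := by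
    intro u hu
    simp only [Set.mem_compl_iff, Set.mem_singleton_iff]
    intro h; rw [h] at hu; linarith [hu.1]
  have hcont : ContinuousOn g (Set.Icc (n:ℝ) ((n:ℝ)+1)) := by
    apply ContinuousOn.div
    · exact ((Real.continuousOn_log.mono hsub).add continuousOn_const).add continuousOn_const
    · exact (continuous_pow (k'+1)).continuousOn
    · intro u hu
      exact pow_ne_zero _ (by intro h; rw [h] at hu; linarith [hu.1])
  obtain ⟨t, ht, hteq⟩ := exists_hasDerivAt_eq_slope g _ (by linarith : (n:ℝ) < (n:ℝ)+1)
    hcont hderiv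
  have ht1 : (1:ℝ) ≤ t := le_trans hn0 ht.1.le
  have ht0 : (0:ℝ) < t := by linarith
  have htn : t ≤ (n:ℝ) + 1 := ht.2.le
  -- rewrite the slope
  have hslope : (Real.log n + c + 2) / (n:ℝ) ^ (k'+1) - (Real.log ((n:ℝ)+1) + c + 2) / ((n:ℝ)+1) ^ (k'+1)
      = -((t⁻¹ * t ^ (k'+1) - (Real.log t + c + 2) * ((k'+1) * t ^ k')) / (t ^ (k'+1)) ^ 2) := by
    rw [hteq]
    have : ((n:ℝ)+1) - (n:ℝ) = 1 := by ring
    rw [this, div_one]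
    simp only [hg]
    push_cast
    ring
  rw [hslope]
  have hT : (0:ℝ) < t ^ k' := pow_pos ht0 k'
  have htinv : t⁻¹ * t ^ (k'+1) = t ^ k' := by
    rw [pow_succ']
    rw [inv_mul_cancel_left₀ ht0.ne']
  rw [htinv]
  have hlogt : 0 ≤ Real.log t := Real.log_nonneg ht1
  -- first: log(n+1) ≤ log t + 1
  have hlog1 : Real.log ((n:ℝ)+1) ≤ Real.log t + 1 := by
    have h2t : (n:ℝ) + 1 ≤ 2 * t := by nlinarith [ht.1]
    calc Real.log ((n:ℝ)+1) ≤ Real.log (2*t) := Real.log_le_log (by linarith) h2t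
      _ = Real.log 2 + Real.log t := Real.log_mul two_ne_zero ht0.ne'
      _ ≤ Real.log t + 1 := by
          have := Real.log_le_sub_one_of_pos (by norm_num : (0:ℝ) < 2)
          linarith
  -- chain
  have step1 : (Real.log ((n:ℝ)+1) + c) / ((n:ℝ) + 1) ^ (k'+1+1) ≤
      (Real.log t + c + 1) / t ^ (k'+1+1) := by
    apply div_le_div₀ (by linarith) (by linarith) (pow_pos ht0 _)
    exact pow_le_pow_left₀ ht0.le htn _
  have step2 : (Real.log t + c + 1) / t ^ (k'+1+1) ≤
      -((t ^ k' - (Real.log t + c + 2) * (((k':ℝ)+1) * t ^ k')) / (t ^ (k'+1)) ^ 2) := by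
    rw [show -((t ^ k' - (Real.log t + c + 2) * (((k':ℝ)+1) * t ^ k')) / (t ^ (k'+1)) ^ 2) =
      ((Real.log t + c + 2) * (((k':ℝ)+1) * t ^ k') - t ^ k') / (t ^ (k'+1)) ^ 2 from by ring]
    rw [div_le_div_iff₀ (by positivity) (by positivity)]
    have hpow : (t ^ (k'+1)) ^ 2 = t ^ (k'+1+1) * t ^ k' := by ring
    rw [hpow]
    have hkey : 0 ≤ (Real.log t + c + 2) * (k' : ℝ) := by positivity
    nlinarith [mul_pos (pow_pos ht0 (k'+1+1)) hT, pow_pos ht0 (k'+1+1)]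
  calc (Real.log (↑n + 1) + c) / ((n:ℝ) + 1) ^ (k'+1+1) ≤ (Real.log t + c + 1) / t ^ (k'+1+1) := by
        push_cast at step1 ⊢; exact step1
    _ ≤ _ := step2

/-- Tail bound: `∑_{n ∈ A, n > q} (log n + c)/n^(k+1) ≤ (log q + c + 2)/q^k`. -/
lemma sum_log_tail (k : ℕ) (hk : 1 ≤ k) (c : ℝ) (hc : 0 ≤ c) (q : ℕ) (hq : 1 ≤ q)
    (A : Finset ℕ) (hA : ∀ n ∈ A, q < n) :
    ∑ n ∈ A, (Real.log n + c) / (n : ℝ) ^ (k + 1) ≤ (Real.log q + c + 2) / (q : ℝ) ^ k := by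
  set N := max q (A.sup id) with hN
  have hqN : q ≤ N := le_max_left _ _
  have hsub : A ⊆ Finset.Ioc q N := by
    intro n hn
    exact Finset.mem_Ioc.mpr ⟨hA n hn, le_trans (Finset.le_sup (f := id) hn) (le_max_right _ _)⟩
  have key : ∀ M, q ≤ M → (Real.log M + c + 2) / (M:ℝ) ^ k +
      ∑ n ∈ Finset.Ioc q M, (Real.log n + c) / (n : ℝ) ^ (k+1) ≤
      (Real.log q + c + 2) / (q : ℝ) ^ k := by
    intro M hM
    induction M, hM using Nat.le_induction with
    | base => simp
    | succ M hM ih =>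
      rw [Finset.sum_Ioc_succ_top hM]
      have hstep := step_ineq k hk c hc M (le_trans hq hM)
      push_cast at hstep ⊢
      linarith
  have h1 : ∑ n ∈ A, (Real.log n + c) / (n : ℝ) ^ (k+1) ≤
      ∑ n ∈ Finset.Ioc q N, (Real.log n + c) / (n : ℝ) ^ (k+1) := by
    apply Finset.sum_le_sum_of_subset_of_nonneg hsub
    intro n hn _
    have hn1 : 1 ≤ n := le_trans hq (Finset.mem_Ioc.mp hn).1.le
    have : (0:ℝ) ≤ Real.log n := Real.log_nonneg (by exact_mod_cast hn1)
    positivity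
  have h2 : (0:ℝ) ≤ (Real.log N + c + 2) / (N:ℝ) ^ k := by
    have hN1 : 1 ≤ N := le_trans hq hqN
    have : (0:ℝ) ≤ Real.log N := Real.log_nonneg (by exact_mod_cast hN1)
    positivity
  have := key N hqN
  linarith

/-- Harmonic sum bound. -/
lemma sum_inv_le (y : ℕ) (hy : 1 ≤ y) (A : Finset ℕ) (hA : ∀ a ∈ A, 1 ≤ a ∧ a ≤ y) :
    ∑ a ∈ A, ((a : ℝ))⁻¹ ≤ 1 + Real.log y := by
  have hsub : A ⊆ Finset.Icc 1 y := fun a ha => Finset.mem_Icc.mpr (hA a ha)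
  have h1 : ∑ a ∈ A, ((a:ℝ))⁻¹ ≤ ∑ a ∈ Finset.Icc 1 y, ((a:ℝ))⁻¹ := by
    apply Finset.sum_le_sum_of_subset_of_nonneg hsub
    intro a _ _; positivity
  refine le_trans h1 ?_
  clear h1 hsub hA A
  induction y, hy using Nat.le_induction with
  | base => simp
  | succ y hy ih =>
    rw [Finset.sum_Icc_succ_top (by omega)]
    have hy0 : (0:ℝ) < y := by exact_mod_cast hy
    have hlog : ((y:ℝ)+1)⁻¹ ≤ Real.log ((y:ℝ)+1) - Real.log y := by
      have h := Real.log_le_sub_one_of_pos (show (0:ℝ) < y / (y+1) by positivity)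
      rw [Real.log_div hy0.ne' (by positivity)] at h
      have : (y:ℝ)/(y+1) - 1 = -((y:ℝ)+1)⁻¹ := by field_simp; ring
      rw [this] at h
      linarith
    push_cast
    push_cast at ih
    linarith

/-- Bound for a fiber sum: fixed `a ≥ 1`, sum over `b` with `a*b > y`. -/
lemma fiber_bound (s y a : ℕ) (hs : 1 ≤ s) (hy : 1 ≤ y) (ha : 1 ≤ a)
    (B : Finset ℕ) (hB : ∀ b ∈ B, y < a * b) :
    ∑ b ∈ B, (Real.log a + Real.log b) / ((a : ℝ) * b) ^ (s + 1) ≤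
      if a ≤ y then 2 ^ s * (2 * Real.log y + 2) / ((a : ℝ) * (y : ℝ) ^ s)
      else 2 * (Real.log a + 1) / (a : ℝ) ^ (s + 1) := by
  have ha0 : (0:ℝ) < a := by exact_mod_cast ha
  have hloga : 0 ≤ Real.log a := Real.log_nonneg (by exact_mod_cast ha)
  have hrw : ∀ b : ℕ, (Real.log a + Real.log b) / ((a : ℝ) * b) ^ (s + 1)
      = ((a:ℝ) ^ (s+1))⁻¹ * ((Real.log b + Real.log a) / (b:ℝ) ^ (s+1)) := by
    intro b
    rw [mul_pow]
    by_cases hb : (b:ℝ) = 0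
    · simp [hb]
    · field_simp
      ring
  simp only [hrw]
  rw [← Finset.mul_sum]
  split_ifs with hay
  · -- case a ≤ y
    set q := y / a with hqdef
    have hq1 : 1 ≤ q := Nat.one_le_div_iff (by omega) |>.mpr hay
    have hBq : ∀ b ∈ B, q < b := by
      intro b hb
      exact (Nat.div_lt_iff_lt_mul (by omega)).mpr (by rw [mul_comm]; exact hB b hb)
    have htail := sum_log_tail s hs (Real.log a) hloga q hq1 B hBq
    have hq0 : (0:ℝ) < q := by exact_mod_cast hq1
    -- q ≥ y/(2a)
    have hq2 : (y:ℝ) ≤ 2 * a * q := by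
      have h1 : y < q * a + a := Nat.lt_div_mul_add (show 0 < a by omega)
      have h2 : y ≤ 2 * a * q := by
        have : a ≤ a * q := Nat.le_mul_of_pos_right a (by omega)
        nlinarith
      exact_mod_cast h2
    have hnum : Real.log q + Real.log a + 2 ≤ 2 * Real.log y + 2 := by
      have h1 : Real.log q ≤ Real.log y := Real.log_le_log hq0 (by
        exact_mod_cast Nat.div_le_self y a)
      have h2 : Real.log a ≤ Real.log y := Real.log_le_log ha0 (by exact_mod_cast hay)
      linarith
    have hy0 : (0:ℝ) < y := by exact_mod_cast hy
    have hLy : 0 ≤ Real.log y := Real.log_nonneg (by exact_mod_cast hy)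
    have hqpow : ((y:ℝ)/(2*a)) ^ s ≤ (q:ℝ) ^ s := by
      apply pow_le_pow_left₀ (by positivity)
      rw [div_le_iff₀ (by positivity)]
      linarith
    have hstep : (Real.log q + Real.log a + 2) / (q:ℝ) ^ s ≤
        (2 * Real.log y + 2) / ((y:ℝ)/(2*a)) ^ s := by
      apply div_le_div₀ (by linarith) hnum (by positivity) hqpow
    have hfin : ((a:ℝ) ^ (s+1))⁻¹ * ((2 * Real.log y + 2) / ((y:ℝ)/(2*a)) ^ s) =
        2 ^ s * (2 * Real.log y + 2) / ((a : ℝ) * (y : ℝ) ^ s) := by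
      rw [div_pow, div_div_eq_mul_div, mul_pow]
      field_simp
      ring
    calc ((a:ℝ)^(s+1))⁻¹ * ∑ b ∈ B, (Real.log b + Real.log a) / (b:ℝ) ^ (s+1)
        ≤ ((a:ℝ)^(s+1))⁻¹ * ((Real.log q + Real.log a + 2) / (q:ℝ) ^ s) := by
          apply mul_le_mul_of_nonneg_left htail (by positivity)
      _ ≤ ((a:ℝ)^(s+1))⁻¹ * ((2 * Real.log y + 2) / ((y:ℝ)/(2*a)) ^ s) := by
          apply mul_le_mul_of_nonneg_left hstep (by positivity)
      _ = _ := hfin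
  · -- case a > y
    have hsplit : ∑ b ∈ B, (Real.log b + Real.log a) / (b:ℝ) ^ (s+1) ≤
        2 * Real.log a + 2 := by
      have herase : ∀ b ∈ B.erase 1, 1 < b := by
        intro b hb
        have hb1 := Finset.ne_of_mem_erase hb
        have := hB b (Finset.mem_of_mem_erase hb)
        have : b ≠ 0 := by rintro rfl; omega
        omega
      have htail := sum_log_tail s hs (Real.log a) hloga 1 le_rfl (B.erase 1) herase
      simp only [Nat.cast_one, Real.log_one, zero_add, one_pow, div_one] at htail
      have hsum' : ∑ b ∈ B, (Real.log b + Real.log a) / (b:ℝ) ^ (s+1) ≤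
          Real.log a + ∑ b ∈ B.erase 1, (Real.log b + Real.log a) / (b:ℝ) ^ (s+1) := by
        by_cases h1 : 1 ∈ B
        · rw [← Finset.insert_erase h1, Finset.sum_insert (Finset.notMem_erase _ _),
            Finset.erase_insert (Finset.notMem_erase _ _)]
          simp only [Nat.cast_one, Real.log_one, zero_add, one_pow, div_one]
          exact le_rfl
        · rw [Finset.erase_eq_of_notMem h1]
          linarith
      linarith
    calc ((a:ℝ)^(s+1))⁻¹ * ∑ b ∈ B, (Real.log b + Real.log a) / (b:ℝ) ^ (s+1)
        ≤ ((a:ℝ)^(s+1))⁻¹ * (2 * Real.log a + 2) := by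
          apply mul_le_mul_of_nonneg_left hsplit (by positivity)
      _ = 2 * (Real.log a + 1) / (a : ℝ) ^ (s + 1) := by
          field_simp

/-- Bound on sums over pairs with product exceeding `y`. -/
lemma pairs_bound (s y : ℕ) (hs : 1 ≤ s) (hy : 1 ≤ y) (P : Finset (ℕ × ℕ))
    (hP : ∀ p ∈ P, y < p.1 * p.2) :
    ∑ p ∈ P, (Real.log p.1 + Real.log p.2) / ((p.1 : ℝ) * p.2) ^ (s + 1) ≤
      2 ^ (s + 2) * (Real.log y + 2) ^ 2 / (y : ℝ) ^ s := by
  classical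
  have hy0 : (0:ℝ) < y := by exact_mod_cast hy
  have hLy : 0 ≤ Real.log y := Real.log_nonneg (by exact_mod_cast hy)
  set G : ℕ × ℕ → ℝ := fun p => (Real.log p.1 + Real.log p.2) / ((p.1 : ℝ) * p.2) ^ (s + 1)
    with hG
  have hfib := Finset.sum_fiberwise_of_maps_to
    (s := P) (t := P.image Prod.fst) (g := Prod.fst)
    (fun p hp => Finset.mem_image_of_mem _ hp) G
  rw [← hfib]
  -- bound each fiber
  have hfiber : ∀ a ∈ P.image Prod.fst,
      ∑ p ∈ P.filter (fun p => p.1 = a), G p ≤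
      (if a ≤ y then 2 ^ s * (2 * Real.log y + 2) / ((a : ℝ) * (y : ℝ) ^ s)
      else 2 * (Real.log a + 1) / (a : ℝ) ^ (s + 1)) := by
    intro a ha
    obtain ⟨p0, hp0, hp0a⟩ := Finset.mem_image.mp ha
    have ha1 : 1 ≤ a := by
      rw [← hp0a]
      rcases Nat.eq_zero_or_pos p0.1 with h0 | h0
      · exfalso; have := hP p0 hp0; rw [h0, zero_mul] at this; omega
      · omega
    set B := (P.filter (fun p => p.1 = a)).image Prod.snd with hB
    have hinj : Set.InjOn Prod.snd ((P.filter (fun p => p.1 = a) : Finset (ℕ × ℕ)) : Set (ℕ × ℕ)) := by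
      intro p hp q hq hpq
      have hp' := (Finset.mem_filter.mp hp).2
      have hq' := (Finset.mem_filter.mp hq).2
      exact Prod.ext (hp'.trans hq'.symm) hpq
    have hsum : ∑ p ∈ P.filter (fun p => p.1 = a), G p =
        ∑ b ∈ B, (Real.log a + Real.log b) / ((a : ℝ) * b) ^ (s + 1) := by
      rw [hB, Finset.sum_image hinj]
      apply Finset.sum_congr rfl
      intro p hp
      have hp' := (Finset.mem_filter.mp hp).2
      rw [hG]; simp only; rw [hp']
    rw [hsum]
    apply fiber_bound s y a hs hy ha1
    intro b hb
    obtain ⟨p, hp, hpb⟩ := Finset.mem_image.mp hb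
    have h1 := hP p (Finset.mem_filter.mp hp).1
    have h2 := (Finset.mem_filter.mp hp).2
    rw [← hpb, ← h2]; exact h1
  refine le_trans (Finset.sum_le_sum hfiber) ?_
  -- split the outer sum
  rw [← Finset.sum_filter_add_sum_filter_not (P.image Prod.fst) (fun a => a ≤ y)]
  set I1 := (P.image Prod.fst).filter (fun a => a ≤ y) with hI1
  set I2 := (P.image Prod.fst).filter (fun a => ¬ a ≤ y) with hI2
  have hb1 : ∑ a ∈ I1, (if a ≤ y then 2 ^ s * (2 * Real.log y + 2) / ((a : ℝ) * (y : ℝ) ^ s)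
      else 2 * (Real.log a + 1) / (a : ℝ) ^ (s + 1)) ≤
      2 ^ s * (2 * Real.log y + 2) / (y:ℝ) ^ s * (1 + Real.log y) := by
    have : ∀ a ∈ I1, (if a ≤ y then 2 ^ s * (2 * Real.log y + 2) / ((a : ℝ) * (y : ℝ) ^ s)
        else 2 * (Real.log a + 1) / (a : ℝ) ^ (s + 1)) =
        2 ^ s * (2 * Real.log y + 2) / (y:ℝ) ^ s * ((a:ℝ))⁻¹ := by
      intro a ha
      have hay := (Finset.mem_filter.mp ha).2
      rw [if_pos hay]
      field_simp
    rw [Finset.sum_congr rfl this, ← Finset.mul_sum]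
    apply mul_le_mul_of_nonneg_left _ (by positivity)
    apply sum_inv_le y hy
    intro a ha
    have h1 := (Finset.mem_filter.mp ha).2
    have h2 := (Finset.mem_filter.mp ha).1
    obtain ⟨p0, hp0, hp0a⟩ := Finset.mem_image.mp h2
    have ha1 : 1 ≤ a := by
      rw [← hp0a]
      rcases Nat.eq_zero_or_pos p0.1 with h0 | h0
      · exfalso; have := hP p0 hp0; rw [h0, zero_mul] at this; omega
      · omega
    exact ⟨ha1, h1⟩
  have hb2 : ∑ a ∈ I2, (if a ≤ y then 2 ^ s * (2 * Real.log y + 2) / ((a : ℝ) * (y : ℝ) ^ s)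
      else 2 * (Real.log a + 1) / (a : ℝ) ^ (s + 1)) ≤
      2 * ((Real.log y + 1 + 2) / (y:ℝ) ^ s) := by
    have : ∀ a ∈ I2, (if a ≤ y then 2 ^ s * (2 * Real.log y + 2) / ((a : ℝ) * (y : ℝ) ^ s)
        else 2 * (Real.log a + 1) / (a : ℝ) ^ (s + 1)) =
        2 * ((Real.log a + 1) / (a : ℝ) ^ (s + 1)) := by
      intro a ha
      have hay := (Finset.mem_filter.mp ha).2
      rw [if_neg hay]
      ring
    rw [Finset.sum_congr rfl this, ← Finset.mul_sum]
    apply mul_le_mul_of_nonneg_left _ (by norm_num)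
    apply sum_log_tail s hs 1 zero_le_one y hy
    intro a ha
    have := (Finset.mem_filter.mp ha).2
    omega
  have hfinal : 2 ^ s * (2 * Real.log y + 2) / (y:ℝ) ^ s * (1 + Real.log y) +
      2 * ((Real.log y + 1 + 2) / (y:ℝ) ^ s) ≤
      2 ^ (s + 2) * (Real.log y + 2) ^ 2 / (y : ℝ) ^ s := by
    have hyp : (0:ℝ) < (y:ℝ)^s := by positivity
    rw [show 2 ^ s * (2 * Real.log y + 2) / (y:ℝ) ^ s * (1 + Real.log y) +
        2 * ((Real.log y + 1 + 2) / (y:ℝ) ^ s) =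
        (2 ^ s * (2 * Real.log y + 2) * (1 + Real.log y) + 2 * (Real.log y + 1 + 2)) / (y:ℝ) ^ s
        from by ring]
    have h2s : (2:ℝ) ≤ 2 ^ s := by
      calc (2:ℝ) = 2^1 := (pow_one 2).symm
      _ ≤ 2^s := pow_le_pow_right₀ one_le_two hs
    gcongr
    rw [pow_add]
    nlinarith [mul_nonneg (sub_nonneg.mpr h2s) hLy,
        mul_nonneg (sub_nonneg.mpr h2s) (mul_nonneg hLy hLy), hLy, mul_nonneg hLy hLy]
  calc _ ≤ 2 ^ s * (2 * Real.log y + 2) / (y:ℝ) ^ s * (1 + Real.log y) +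
      2 * ((Real.log y + 1 + 2) / (y:ℝ) ^ s) := add_le_add hb1 hb2
    _ ≤ _ := hfinal

end MoebiusSqAux

open MoebiusSqAux

noncomputable def MoebiusSqAux.Fr (s : ℕ) (d : ℕ) : ℝ :=
  (∑ q ∈ d.divisorsAntidiagonal,
      ((ArithmeticFunction.moebius q.1 : ℤ) : ℝ) *
        ((ArithmeticFunction.moebius q.2 : ℤ) : ℝ)) / (d : ℝ) ^ (s + 1) * Real.log d

namespace MoebiusSqAux

lemma norm_Fr_le (s d : ℕ) :
    ‖Fr s d‖ ≤ ∑ q ∈ d.divisorsAntidiagonal,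
      (Real.log q.1 + Real.log q.2) / ((q.1 : ℝ) * q.2) ^ (s + 1) := by
  rcases Nat.eq_zero_or_pos d with rfl | hd
  · simp [Fr]
  rcases eq_or_lt_of_le (show 1 ≤ d from hd) with rfl | hd1
  · simp [Fr]
  -- d ≥ 2
  have hd0 : (0:ℝ) < d := by exact_mod_cast hd
  have hlogd : 0 ≤ Real.log d := Real.log_nonneg (by exact_mod_cast hd)
  have hterm : ∀ q ∈ d.divisorsAntidiagonal,
      (Real.log q.1 + Real.log q.2) / ((q.1 : ℝ) * q.2) ^ (s + 1) =
      Real.log d / (d:ℝ) ^ (s+1) := by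
    intro q hq
    obtain ⟨hq1, hq2⟩ := (Nat.mem_divisorsAntidiagonal.mp hq)
    have h1 : q.1 ≠ 0 := by rintro h; rw [h] at hq1; simp at hq1; omega
    have h2 : q.2 ≠ 0 := by rintro h; rw [h] at hq1; simp at hq1; omega
    have h1' : (0:ℝ) < q.1 := by exact_mod_cast Nat.pos_of_ne_zero h1
    have h2' : (0:ℝ) < q.2 := by exact_mod_cast Nat.pos_of_ne_zero h2
    rw [← Real.log_mul h1'.ne' h2'.ne']
    have : ((q.1 : ℝ) * q.2) = (d : ℝ) := by exact_mod_cast congrArg (Nat.cast (R := ℝ)) hq1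
    rw [this]
  rw [Finset.sum_congr rfl hterm, Finset.sum_const, nsmul_eq_mul]
  rw [Fr, norm_mul, norm_div]
  have hnorm : ‖∑ q ∈ d.divisorsAntidiagonal,
      ((ArithmeticFunction.moebius q.1 : ℤ) : ℝ) * ((ArithmeticFunction.moebius q.2 : ℤ) : ℝ)‖ ≤
      (d.divisorsAntidiagonal.card : ℝ) := by
    refine le_trans (norm_sum_le _ _) ?_
    have hb : ∀ q ∈ d.divisorsAntidiagonal,
        ‖((ArithmeticFunction.moebius q.1 : ℤ) : ℝ) * ((ArithmeticFunction.moebius q.2 : ℤ) : ℝ)‖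
          ≤ 1 := by
      intro q _
      rw [norm_mul]
      have h1 : ‖((ArithmeticFunction.moebius q.1 : ℤ) : ℝ)‖ ≤ 1 := by
        rw [Real.norm_eq_abs, ← Int.cast_abs]
        exact_mod_cast ArithmeticFunction.abs_moebius_le_one
      have h2 : ‖((ArithmeticFunction.moebius q.2 : ℤ) : ℝ)‖ ≤ 1 := by
        rw [Real.norm_eq_abs, ← Int.cast_abs]
        exact_mod_cast ArithmeticFunction.abs_moebius_le_one
      nlinarith [norm_nonneg ((ArithmeticFunction.moebius q.1 : ℤ) : ℝ)]
    have := Finset.sum_le_card_nsmul d.divisorsAntidiagonal _ 1 hb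
    simpa using this
  have hpow : ‖(d:ℝ) ^ (s+1)‖ = (d:ℝ)^(s+1) := by
    rw [Real.norm_eq_abs, abs_of_pos (by positivity)]
  have hlog : ‖Real.log d‖ = Real.log d := by rw [Real.norm_eq_abs, abs_of_nonneg hlogd]
  rw [hpow, hlog]
  rw [div_mul_eq_mul_div, mul_div_assoc]
  apply mul_le_mul_of_nonneg_right hnorm (by positivity)

lemma sum_norm_Fr_le (s y : ℕ) (hs : 1 ≤ s) (hy : 1 ≤ y) (A : Finset ℕ)
    (hA : ∀ d ∈ A, y < d) :
    ∑ d ∈ A, ‖Fr s d‖ ≤ 2 ^ (s + 2) * (Real.log y + 2) ^ 2 / (y : ℝ) ^ s := by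
  classical
  refine le_trans (Finset.sum_le_sum fun d hd => norm_Fr_le s d) ?_
  have hdisj : (↑A : Set ℕ).PairwiseDisjoint Nat.divisorsAntidiagonal := by
    intro d1 _ d2 _ hne
    simp only [Function.onFun, Finset.disjoint_left]
    intro q hq1 hq2
    have h1 := (Nat.mem_divisorsAntidiagonal.mp hq1).1
    have h2 := (Nat.mem_divisorsAntidiagonal.mp hq2).1
    exact hne (h1.symm.trans h2)
  rw [← Finset.sum_biUnion hdisj]
  apply pairs_bound s y hs hy
  intro p hp
  obtain ⟨d, hd, hpd⟩ := Finset.mem_biUnion.mp hp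
  have := (Nat.mem_divisorsAntidiagonal.mp hpd).1
  rw [this]
  exact hA d hd

lemma summable_norm_Fr (s : ℕ) (hs : 1 ≤ s) : Summable (fun d => ‖Fr s d‖) := by
  apply summable_of_sum_le (c := 2 ^ (s + 2) * (Real.log 1 + 2) ^ 2 / (1 : ℝ) ^ s)
    (fun d => norm_nonneg _)
  intro A
  classical
  rw [← Finset.sum_filter_add_sum_filter_not A (fun d => d ≤ 1)]
  have h1 : ∑ d ∈ A.filter (fun d => d ≤ 1), ‖Fr s d‖ = 0 := by
    apply Finset.sum_eq_zero
    intro d hd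
    have := (Finset.mem_filter.mp hd).2
    interval_cases d <;> simp [Fr]
  rw [h1, zero_add]
  have := sum_norm_Fr_le s 1 hs le_rfl (A.filter (fun d => ¬ d ≤ 1))
    (fun d hd => by have := (Finset.mem_filter.mp hd).2; omega)
  simpa using this

lemma summable_Fr (s : ℕ) (hs : 1 ≤ s) : Summable (Fr s) :=
  (summable_norm_Fr s hs).of_norm

open scoped LSeries.notation
open ArithmeticFunction

lemma card_divisorsAntidiagonal_le (n : ℕ) : n.divisorsAntidiagonal.card ≤ n := by
  rw [← Nat.map_div_right_divisors, Finset.card_map]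
  calc n.divisors.card ≤ (Finset.Icc 1 n).card := by
        apply Finset.card_le_card
        intro d hd
        exact Finset.mem_Icc.mpr ⟨Nat.pos_of_mem_divisors hd, Nat.divisor_le hd⟩
    _ = n := by rw [Nat.card_Icc]; omega

lemma tsum_Fr_eq (s : ℕ) (hs : 2 ≤ s) :
    ((∑' d, Fr s d : ℝ) : ℂ) =
      2 * deriv riemannZeta ((s : ℂ) + 1) / riemannZeta ((s : ℂ) + 1) ^ 3 := by
  have hs1 : (1:ℕ) ≤ s := by omega
  have hsr : (2:ℝ) ≤ (s:ℝ) := by exact_mod_cast hs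
  set S : ℂ := (s : ℂ) + 1 with hSdef
  have hSre : S.re = (s : ℝ) + 1 := by simp [hSdef]
  have hS1 : 1 < S.re := by rw [hSre]; linarith
  set f : ℕ → ℂ := fun n =>
    (((ArithmeticFunction.moebius * ArithmeticFunction.moebius : ArithmeticFunction ℤ) n : ℤ) : ℂ)
    with hfdef
  -- bound on f
  have hfbound : ∀ n : ℕ, n ≠ 0 → ‖f n‖ ≤ 1 * (n : ℝ) ^ (1 : ℝ) := by
    intro n _
    rw [one_mul, Real.rpow_one, hfdef]
    simp only
    rw [ArithmeticFunction.mul_apply]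
    push_cast
    refine le_trans (norm_sum_le _ _) ?_
    have hb : ∀ q ∈ n.divisorsAntidiagonal,
        ‖((ArithmeticFunction.moebius q.1 : ℤ) : ℂ) * ((ArithmeticFunction.moebius q.2 : ℤ) : ℂ)‖
          ≤ 1 := by
      intro q _
      rw [norm_mul]
      have h1 : ‖((ArithmeticFunction.moebius q.1 : ℤ) : ℂ)‖ ≤ 1 := by
        rw [Complex.norm_intCast, ← Int.cast_abs]
        exact_mod_cast ArithmeticFunction.abs_moebius_le_one
      have h2 : ‖((ArithmeticFunction.moebius q.2 : ℤ) : ℂ)‖ ≤ 1 := by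
        rw [Complex.norm_intCast, ← Int.cast_abs]
        exact_mod_cast ArithmeticFunction.abs_moebius_le_one
      nlinarith [norm_nonneg ((ArithmeticFunction.moebius q.1 : ℤ) : ℂ)]
    refine le_trans (Finset.sum_le_card_nsmul n.divisorsAntidiagonal _ 1 hb) ?_
    simp only [nsmul_eq_mul, mul_one]
    exact_mod_cast card_divisorsAntidiagonal_le n
  have habs : LSeries.abscissaOfAbsConv f ≤ 2 := by
    have := LSeries.abscissaOfAbsConv_le_of_le_const_mul_rpow (f := f) (x := 1) ⟨1, hfbound⟩
    refine le_trans this ?_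
    norm_num
  have habs' : LSeries.abscissaOfAbsConv f < S.re := by
    refine lt_of_le_of_lt habs ?_
    rw [hSre]
    have h2 : ((2:ℝ) : EReal) < (((s:ℝ)+1 : ℝ) : EReal) := by
      rw [EReal.coe_lt_coe_iff]
      linarith
    exact h2
  -- equality with zeta on the open set
  have heq : Set.EqOn (LSeries f) (fun z => ((riemannZeta z) ^ 2)⁻¹) {z : ℂ | 2 < z.re} := by
    intro z hz
    have hz1 : 1 < z.re := by have : (2:ℝ) < z.re := hz; linarith
    have hμsum : LSeriesSummable (fun n : ℕ => ((moebius n : ℤ) : ℂ)) z :=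
      ArithmeticFunction.LSeriesSummable_moebius_iff.mpr hz1
    have hμcoe : (fun n : ℕ => (((moebius : ArithmeticFunction ℤ) : ArithmeticFunction ℂ) n)) =
        (fun n : ℕ => ((moebius n : ℤ) : ℂ)) := by
      funext n; exact ArithmeticFunction.intCoe_apply
    have hμsum' : LSeriesSummable
        (fun n : ℕ => (((moebius : ArithmeticFunction ℤ) : ArithmeticFunction ℂ) n)) z := by
      rw [hμcoe]; exact hμsum
    have hζne : riemannZeta z ≠ 0 := riemannZeta_ne_zero_of_one_le_re hz1.le
    have hμval : LSeries (fun n : ℕ => ((moebius n : ℤ) : ℂ)) z = (riemannZeta z)⁻¹ := by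
      have h1 := ArithmeticFunction.LSeries_zeta_mul_Lseries_moebius (s := z) hz1
      rw [ArithmeticFunction.LSeries_zeta_eq_riemannZeta hz1] at h1
      exact eq_inv_of_mul_eq_one_left (by rw [mul_comm]; exact h1)
    have hf1 : f = fun n : ℕ =>
        ((((moebius : ArithmeticFunction ℤ) : ArithmeticFunction ℂ) *
          ((moebius : ArithmeticFunction ℤ) : ArithmeticFunction ℂ)) n) := by
      funext n
      rw [hfdef]
      simp only
      rw [← ArithmeticFunction.intCoe_mul, ArithmeticFunction.intCoe_apply]
    have := ArithmeticFunction.LSeries_mul' (s := z)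
      (f := ((moebius : ArithmeticFunction ℤ) : ArithmeticFunction ℂ))
      (g := ((moebius : ArithmeticFunction ℤ) : ArithmeticFunction ℂ)) hμsum' hμsum'
    calc LSeries f z
        = LSeries (fun n : ℕ =>
            ((((moebius : ArithmeticFunction ℤ) : ArithmeticFunction ℂ) *
              ((moebius : ArithmeticFunction ℤ) : ArithmeticFunction ℂ)) n)) z := by rw [← hf1]
      _ = LSeries (fun n : ℕ =>
            (((moebius : ArithmeticFunction ℤ) : ArithmeticFunction ℂ) n)) z *
          LSeries (fun n : ℕ =>
            (((moebius : ArithmeticFunction ℤ) : ArithmeticFunction ℂ) n)) z := this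
      _ = (riemannZeta z)⁻¹ * (riemannZeta z)⁻¹ := by rw [hμcoe, hμval]
      _ = ((riemannZeta z) ^ 2)⁻¹ := by rw [sq, mul_inv]
  have hopen : IsOpen {z : ℂ | 2 < z.re} := isOpen_lt continuous_const Complex.continuous_re
  have hmem : S ∈ {z : ℂ | 2 < z.re} := by
    simp only [Set.mem_setOf_eq, hSre]; linarith
  have hevent : LSeries f =ᶠ[nhds S] (fun z => ((riemannZeta z) ^ 2)⁻¹) :=
    Filter.eventuallyEq_of_mem (hopen.mem_nhds hmem) heq
  have hSne1 : S ≠ 1 := by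
    intro h
    rw [h] at hSre
    simp at hSre
    linarith
  have hζne : riemannZeta S ≠ 0 := riemannZeta_ne_zero_of_one_le_re (by rw [hSre]; linarith)
  have hζd : HasDerivAt riemannZeta (deriv riemannZeta S) S :=
    (differentiableAt_riemannZeta hSne1).hasDerivAt
  have hD : HasDerivAt (fun z => ((riemannZeta z) ^ 2)⁻¹)
      (-((2:ℕ) * riemannZeta S ^ (2-1) * deriv riemannZeta S) / ((riemannZeta S) ^ 2) ^ 2) S :=
    (hζd.pow 2).inv (pow_ne_zero 2 hζne)
  have hderiv_eq : deriv (LSeries f) S =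
      -((2:ℕ) * riemannZeta S ^ (2-1) * deriv riemannZeta S) / ((riemannZeta S) ^ 2) ^ 2 := by
    rw [hevent.deriv_eq]
    exact hD.deriv
  -- tsum to LSeries
  have hterm : ∀ n : ℕ, ((Fr s n : ℝ) : ℂ) = LSeries.term (LSeries.logMul f) S n := by
    intro n
    rcases eq_or_ne n 0 with rfl | hn
    · simp [Fr, LSeries.term_zero]
    · rw [LSeries.term_of_ne_zero hn]
      have hn0 : (0:ℝ) < (n:ℝ) := by
        exact_mod_cast Nat.pos_of_ne_zero hn
      have hSnat : (n : ℂ) ^ S = (((n:ℝ) ^ (s+1) : ℝ) : ℂ) := by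
        rw [hSdef, show (s:ℂ) + 1 = ((s + 1 : ℕ) : ℂ) by push_cast; ring,
          Complex.cpow_natCast]
        push_cast
        ring
      rw [hSnat]
      have hlogn : (Complex.log n) = ((Real.log n : ℝ) : ℂ) := by
        rw [Complex.ofReal_log hn0.le]
        norm_num
      rw [LSeries.logMul, hlogn, hfdef]
      simp only
      rw [ArithmeticFunction.mul_apply, Fr]
      push_cast
      have hpow_ne : (((n:ℝ) ^ (s+1) : ℝ) : ℂ) ≠ 0 := by
        exact_mod_cast (pow_pos hn0 (s+1)).ne'
      field_simp
  have htsum : ((∑' d, Fr s d : ℝ) : ℂ) = LSeries (LSeries.logMul f) S := by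
    rw [LSeries]
    have h := Complex.ofRealCLM.map_tsum (summable_Fr s hs1)
    simp only [Complex.ofRealCLM_apply] at h
    rw [h]
    exact tsum_congr hterm
  have hLd := LSeries_deriv habs'
  rw [htsum]
  rw [show LSeries (LSeries.logMul f) S = -deriv (LSeries f) S from by rw [hLd]; ring]
  rw [hderiv_eq]
  have hζcube : riemannZeta S ^ 3 ≠ 0 := pow_ne_zero 3 hζne
  norm_num
  field_simp

end MoebiusSqAux

/-- For fixed `s ≥ 2`, as `x → ∞`:
`∑_{d ≤ x} ((μ*μ)(d)/d^{s+1}) log d = 2 ζ'(s+1)/ζ(s+1)^3 + O_s(x^{−s} (log x)^2)`. -/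
theorem moebius_sq_conv_log_partial_sum (s : ℕ) (hs : 2 ≤ s) :
    (fun x : ℝ =>
        ((∑ d ∈ Finset.Icc 1 ⌊x⌋₊,
            (∑ q ∈ d.divisorsAntidiagonal,
              ((ArithmeticFunction.moebius q.1 : ℤ) : ℝ) *
                ((ArithmeticFunction.moebius q.2 : ℤ) : ℝ)) / (d : ℝ) ^ (s + 1) *
              Real.log d : ℝ) : ℂ)
          - 2 * deriv riemannZeta ((s : ℂ) + 1) / riemannZeta ((s : ℂ) + 1) ^ 3)
      =O[atTop] fun x : ℝ => x ^ (-(s : ℝ)) * Real.log x ^ 2 := by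
  have hs1 : 1 ≤ s := by omega
  rw [Asymptotics.isBigO_iff]
  refine ⟨2 ^ (s + 2) * 9 * 2 ^ s, ?_⟩
  filter_upwards [eventually_ge_atTop (3:ℝ)] with x hx
  have hx0 : (0:ℝ) < x := by linarith
  set y := ⌊x⌋₊ with hydef
  have hy3 : 3 ≤ y := Nat.le_floor (by exact_mod_cast hx)
  have hy1 : 1 ≤ y := by omega
  have hyR : (1:ℝ) ≤ (y:ℝ) := by exact_mod_cast hy1
  have hsumm := MoebiusSqAux.summable_Fr s hs1
  have hkey := Summable.sum_add_tsum_compl (s := Finset.Icc 0 y) hsumm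
  have hps : ∑ d ∈ Finset.Icc 1 y, MoebiusSqAux.Fr s d
      = ∑ d ∈ Finset.Icc 0 y, MoebiusSqAux.Fr s d := by
    apply Finset.sum_subset (Finset.Icc_subset_Icc_left (by omega))
    intro d hd hd'
    have hd0 : d = 0 := by
      simp only [Finset.mem_Icc] at hd hd'
      omega
    subst hd0
    simp [MoebiusSqAux.Fr]
  have hFr : (∑ d ∈ Finset.Icc 1 ⌊x⌋₊,
      (∑ q ∈ d.divisorsAntidiagonal,
        ((ArithmeticFunction.moebius q.1 : ℤ) : ℝ) *
          ((ArithmeticFunction.moebius q.2 : ℤ) : ℝ)) / (d : ℝ) ^ (s + 1) *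
        Real.log d : ℝ) = ∑ d ∈ Finset.Icc 1 y, MoebiusSqAux.Fr s d := rfl
  rw [hFr, hps, ← MoebiusSqAux.tsum_Fr_eq s hs]
  rw [show ((∑ d ∈ Finset.Icc 0 y, MoebiusSqAux.Fr s d : ℝ) : ℂ)
      - ((∑' d, MoebiusSqAux.Fr s d : ℝ) : ℂ)
      = ((∑ d ∈ Finset.Icc 0 y, MoebiusSqAux.Fr s d - ∑' d, MoebiusSqAux.Fr s d : ℝ) : ℂ)
    from by push_cast; ring]
  rw [Complex.norm_real]
  have htail_eq : (∑ d ∈ Finset.Icc 0 y, MoebiusSqAux.Fr s d) - ∑' d, MoebiusSqAux.Fr s d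
      = -(∑' (d : ↑(↑(Finset.Icc 0 y) : Set ℕ)ᶜ), MoebiusSqAux.Fr s ↑d) := by
    linarith [hkey]
  rw [htail_eq, norm_neg]
  -- tail bound
  have htail : ‖∑' (d : ↑(↑(Finset.Icc 0 y) : Set ℕ)ᶜ), MoebiusSqAux.Fr s ↑d‖ ≤
      2 ^ (s + 2) * (Real.log y + 2) ^ 2 / (y : ℝ) ^ s := by
    have hsub := (MoebiusSqAux.summable_norm_Fr s hs1).subtype
      ((↑(Finset.Icc 0 y) : Set ℕ)ᶜ)
    refine le_trans (norm_tsum_le_tsum_norm hsub) ?_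
    apply Summable.tsum_le_of_sum_le hsub
    intro u
    have hmap := MoebiusSqAux.sum_norm_Fr_le s y hs1 hy1
      (u.map (Function.Embedding.subtype _)) ?_
    · rw [Finset.sum_map] at hmap
      exact hmap
    · intro d hd
      obtain ⟨i, _, hi⟩ := Finset.mem_map.mp hd
      have h2 : (i : ℕ) ∈ ((↑(Finset.Icc 0 y) : Set ℕ)ᶜ) := i.2
      simp only [Set.mem_compl_iff, Finset.coe_Icc, Set.mem_Icc, Finset.mem_coe, Finset.mem_Icc] at h2
      subst hi
      simp only [Function.Embedding.coe_subtype]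
      omega
  refine le_trans htail ?_
  -- numeric comparison
  have hlogx : 1 ≤ Real.log x := by
    have h := (Real.lt_log_iff_exp_lt hx0).mpr
      (lt_of_lt_of_le (Real.exp_one_lt_d9.trans (by norm_num)) hx)
    linarith
  have hyx : (y:ℝ) ≤ x := Nat.floor_le hx0.le
  have hLy : 0 ≤ Real.log y := Real.log_nonneg hyR
  have hylog : Real.log y ≤ Real.log x := Real.log_le_log (by linarith) hyx
  have hsq : (Real.log y + 2) ^ 2 ≤ 9 * Real.log x ^ 2 := by nlinarith
  have hxy : x ≤ 2 * y := by
    have h := Nat.sub_one_lt_floor x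
    rw [← hydef] at h
    linarith
  have hyp : (0:ℝ) < (y:ℝ) ^ s := by positivity
  have hxp : (0:ℝ) < x ^ s := by positivity
  have hpow : x ^ s ≤ 2 ^ s * (y:ℝ) ^ s := by
    calc x ^ s ≤ (2 * (y:ℝ)) ^ s := pow_le_pow_left₀ hx0.le hxy s
      _ = 2 ^ s * (y:ℝ) ^ s := mul_pow 2 _ s
  have hinv : ((y:ℝ) ^ s)⁻¹ ≤ 2 ^ s / x ^ s := by
    rw [le_div_iff₀ hxp, inv_mul_le_iff₀ hyp]
    linarith
  have hrhs : ‖x ^ (-(s : ℝ)) * Real.log x ^ 2‖ = (x ^ s)⁻¹ * Real.log x ^ 2 := by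
    rw [Real.norm_eq_abs, abs_of_nonneg (by positivity)]
    rw [Real.rpow_neg hx0.le, Real.rpow_natCast]
  rw [hrhs]
  calc 2 ^ (s + 2) * (Real.log y + 2) ^ 2 / (y:ℝ) ^ s
      = 2 ^ (s + 2) * ((Real.log y + 2) ^ 2 * ((y:ℝ) ^ s)⁻¹) := by ring
    _ ≤ 2 ^ (s + 2) * ((9 * Real.log x ^ 2) * (2 ^ s / x ^ s)) := by
        apply mul_le_mul_of_nonneg_left _ (by positivity)
        exact mul_le_mul hsq hinv (by positivity) (by positivity)
    _ = 2 ^ (s + 2) * 9 * 2 ^ s * ((x ^ s)⁻¹ * Real.log x ^ 2) := by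
        field_simp
end

section
/- For fixed integer s ≥ 2 and x ≥ 1: Σ_{d ≤ x} (μ*|μ|)(d)/d^{s+1} = 1/ζ(2s+2) + O_s(x^{−s} log x). -/
open Finset Filter

open ArithmeticFunction in
lemma nat_isSquare_pow_iff {p : ℕ} (hp : p.Prime) (k : ℕ) : IsSquare (p ^ k) ↔ Even k := by
  constructor
  · rintro ⟨c, hc⟩
    have hc0 : c ≠ 0 := by
      rintro rfl
      rw [mul_zero] at hc
      exact pow_ne_zero k hp.pos.ne' hc
    have h1 : (p ^ k).factorization p = k := by simp [hp.factorization_pow]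
    have h2 : (c * c).factorization p = c.factorization p + c.factorization p := by
      rw [Nat.factorization_mul hc0 hc0]; rfl
    rw [hc, h2] at h1
    exact ⟨_, h1.symm⟩
  · rintro ⟨j, rfl⟩
    exact ⟨p ^ j, by rw [← pow_add]⟩

lemma nat_isSquare_mul_iff {m n : ℕ} (h : m.Coprime n) :
    IsSquare (m * n) ↔ IsSquare m ∧ IsSquare n := by
  constructor
  · rintro ⟨c, hc⟩
    have hc' : m * n = c ^ 2 := by rw [hc, sq]
    have hu : IsUnit (GCDMonoid.gcd m n) := by
      rw [Nat.isUnit_iff]; exact h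
    obtain ⟨a, ha⟩ := exists_eq_pow_of_mul_eq_pow hu hc'
    obtain ⟨b, hb⟩ := exists_eq_pow_of_mul_eq_pow (by rwa [gcd_comm]) (mul_comm m n ▸ hc')
    exact ⟨⟨a, by rw [ha, sq]⟩, ⟨b, by rw [hb, sq]⟩⟩
  · rintro ⟨⟨a, rfl⟩, ⟨b, rfl⟩⟩
    exact ⟨a * b, by ring⟩

open ArithmeticFunction
open scoped ArithmeticFunction.Moebius

/-- `|μ|` as an arithmetic function. -/
noncomputable def muAbs : ArithmeticFunction ℤ := ⟨fun n => |μ n|, by simp⟩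

/-- `μ(√n)` on squares, `0` otherwise. -/
noncomputable def sqMu : ArithmeticFunction ℤ :=
  ⟨fun n => if IsSquare n then μ n.sqrt else 0, by
    show (if IsSquare 0 then μ (Nat.sqrt 0) else 0) = 0
    rw [if_pos ⟨0, rfl⟩, Nat.sqrt_zero, ArithmeticFunction.map_zero]⟩

lemma muAbs_apply (n : ℕ) : muAbs n = |μ n| := rfl
lemma sqMu_apply (n : ℕ) : sqMu n = if IsSquare n then μ n.sqrt else 0 := rfl

lemma muAbs_mult : muAbs.IsMultiplicative := by
  constructor
  · simp [muAbs_apply]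
  · intro m n h
    simp only [muAbs_apply, isMultiplicative_moebius.map_mul_of_coprime h, abs_mul]

lemma sqMu_mult : sqMu.IsMultiplicative := by
  constructor
  · rw [sqMu_apply, if_pos IsSquare.one, Nat.sqrt_one]
    simp
  · intro m n h
    rw [sqMu_apply, sqMu_apply, sqMu_apply]
    by_cases hmn : IsSquare m ∧ IsSquare n
    · obtain ⟨⟨a, rfl⟩, ⟨b, rfl⟩⟩ := hmn
      rw [if_pos (show IsSquare (a * a) from ⟨a, rfl⟩),
        if_pos (show IsSquare (b * b) from ⟨b, rfl⟩),
        if_pos (show IsSquare (a * a * (b * b)) from ⟨a * b, by ring⟩)]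
      have hab : a.Coprime b := by
        exact Nat.Coprime.coprime_dvd_left (dvd_mul_left a a)
          (Nat.Coprime.coprime_dvd_right (dvd_mul_left b b) h)
      have h1 : a * a * (b * b) = (a * b) * (a * b) := by ring
      rw [h1, Nat.sqrt_eq, Nat.sqrt_eq, Nat.sqrt_eq,
        isMultiplicative_moebius.map_mul_of_coprime hab]
    · rw [if_neg (fun hs => hmn ((nat_isSquare_mul_iff h).mp hs))]
      rcases not_and_or.mp hmn with h' | h'
      · rw [if_neg h', zero_mul]
      · rw [if_neg h', mul_zero]

lemma mu_mul_muAbs_eq : (ArithmeticFunction.moebius * muAbs : ArithmeticFunction ℤ) = sqMu := by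
  rw [IsMultiplicative.eq_iff_eq_on_prime_powers _ (isMultiplicative_moebius.mul muAbs_mult)
    _ sqMu_mult]
  intro p i hp
  have hlhs : (ArithmeticFunction.moebius * muAbs : ArithmeticFunction ℤ) (p ^ i)
      = ∑ j ∈ range (i + 1), μ (p ^ j) * |μ (p ^ (i - j))| := by
    rw [mul_apply, Nat.sum_divisorsAntidiagonal (fun a b => μ a * muAbs b),
      Nat.divisors_prime_pow hp, Finset.sum_map]
    refine Finset.sum_congr rfl fun j hj => ?_
    have hji : j ≤ i := Nat.lt_succ_iff.mp (mem_range.mp hj)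
    simp only [Function.Embedding.coeFn_mk, muAbs_apply, Nat.pow_div hji hp.pos]
  have hrhs : sqMu (p ^ i) = if i = 0 then 1 else if i = 2 then -1 else 0 := by
    rw [sqMu_apply]
    rcases Nat.even_or_odd i with he | ho
    · obtain ⟨j, rfl⟩ := he
      rw [if_pos ((nat_isSquare_pow_iff hp _).mpr ⟨j, rfl⟩)]
      have h2 : p ^ (j + j) = (p ^ j) ^ 2 := by ring
      rw [h2, Nat.sqrt_eq']
      match j with
      | 0 => simp
      | 1 => rw [pow_one, moebius_apply_prime hp]; norm_num
      | (n + 2) =>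
        rw [moebius_apply_prime_pow hp (by omega), if_neg (by omega), if_neg (by omega),
          if_neg (by omega)]
    · rw [if_neg (fun hs => (Nat.not_even_iff_odd.mpr ho) ((nat_isSquare_pow_iff hp _).mp hs)),
        if_neg (by rintro rfl; exact (Nat.not_even_iff_odd.mpr ho) Even.zero),
        if_neg (by rintro rfl; exact (Nat.not_even_iff_odd.mpr ho) (by norm_num))]
  rw [hlhs, hrhs]
  match i with
  | 0 => simp
  | 1 =>
    rw [Finset.sum_range_succ, Finset.sum_range_one]
    simp [moebius_apply_prime hp]
  | 2 =>
    rw [Finset.sum_range_succ, Finset.sum_range_succ, Finset.sum_range_one]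
    rw [if_neg (by omega), if_pos rfl]
    simp only [pow_zero, Nat.sub_zero, Nat.sub_self, pow_one]
    rw [moebius_apply_prime_pow hp (by omega), if_neg (by omega), moebius_apply_prime hp]
    norm_num [moebius_apply_prime hp]
  | (n + 3) =>
    rw [if_neg (by omega), if_neg (by omega)]
    refine Finset.sum_eq_zero fun j hj => ?_
    match j with
    | 0 =>
      rw [pow_zero, Nat.sub_zero, moebius_apply_prime_pow hp (by omega), if_neg (by omega)]
      simp
    | 1 =>
      rw [moebius_apply_prime_pow hp (by omega) (k := n + 3 - 1), if_neg (by omega)]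
      simp
    | (m + 2) =>
      rw [moebius_apply_prime_pow hp (by omega), if_neg (by omega), zero_mul]

lemma conv_real (d : ℕ) :
    (∑ q ∈ d.divisorsAntidiagonal, ((μ q.1 : ℤ) : ℝ) * |((μ q.2 : ℤ) : ℝ)|)
      = if IsSquare d then ((μ d.sqrt : ℤ) : ℝ) else 0 := by
  have h := congrArg (fun f : ArithmeticFunction ℤ => ((f d : ℤ) : ℝ)) mu_mul_muAbs_eq
  simp only [mul_apply, sqMu_apply, muAbs_apply] at h
  rw [show (∑ q ∈ d.divisorsAntidiagonal, ((μ q.1 : ℤ) : ℝ) * |((μ q.2 : ℤ) : ℝ)|)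
      = ((∑ q ∈ d.divisorsAntidiagonal, μ q.1 * |μ q.2| : ℤ) : ℝ) by push_cast; rfl, h,
    apply_ite (fun z : ℤ => (z : ℝ))]
  norm_num

lemma reindex (s N : ℕ) :
    ∑ d ∈ Finset.Icc 1 N, (if IsSquare d then ((μ d.sqrt : ℤ) : ℝ) else 0) / (d : ℝ) ^ (s + 1)
      = ∑ m ∈ Finset.Icc 1 N.sqrt, ((μ m : ℤ) : ℝ) / (m : ℝ) ^ (2 * s + 2) := by
  have hsub : (Finset.Icc 1 N.sqrt).image (· ^ 2) ⊆ Finset.Icc 1 N := by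
    intro d hd
    obtain ⟨m, hm, rfl⟩ := Finset.mem_image.mp hd
    obtain ⟨hm1, hm2⟩ := Finset.mem_Icc.mp hm
    refine Finset.mem_Icc.mpr ⟨Nat.one_le_iff_ne_zero.mpr (pow_ne_zero _ (by omega)), ?_⟩
    calc m ^ 2 ≤ N.sqrt ^ 2 := Nat.pow_le_pow_left hm2 2
    _ ≤ N := Nat.sqrt_le' N
  rw [← Finset.sum_subset hsub (by
    intro d hd hnd
    obtain ⟨hd1, hd2⟩ := Finset.mem_Icc.mp hd
    rw [if_neg, zero_div]
    rintro ⟨c, rfl⟩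
    refine hnd (Finset.mem_image.mpr ⟨c, Finset.mem_Icc.mpr ⟨?_, ?_⟩, sq c⟩)
    · rcases Nat.eq_zero_or_pos c with rfl | h
      · omega
      · exact h
    · calc c = (c * c).sqrt := (Nat.sqrt_eq c).symm
      _ ≤ N.sqrt := Nat.sqrt_le_sqrt hd2)]
  rw [Finset.sum_image (fun a _ b _ hab => Nat.pow_left_injective two_ne_zero hab)]
  refine Finset.sum_congr rfl fun m hm => ?_
  rw [if_pos ⟨m, sq m⟩, Nat.sqrt_eq']
  congr 1
  push_cast
  ring

/-- For fixed `s ≥ 2`, as `x → ∞`: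
`∑_{d ≤ x} (μ*|μ|)(d)/d^{s+1} = 1/ζ(2s+2) + O_s(x^{−s} log x)`. -/
theorem moebius_sqfree_conv_partial_sum (s : ℕ) (hs : 2 ≤ s) :
    (fun x : ℝ =>
        ((∑ d ∈ Finset.Icc 1 ⌊x⌋₊,
            (∑ q ∈ d.divisorsAntidiagonal,
              ((ArithmeticFunction.moebius q.1 : ℤ) : ℝ) *
                |((ArithmeticFunction.moebius q.2 : ℤ) : ℝ)|) / (d : ℝ) ^ (s + 1) : ℝ) : ℂ)
          - 1 / riemannZeta (2 * (s : ℂ) + 2))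
      =O[atTop] fun x : ℝ => x ^ (-(s : ℝ)) * Real.log x := by
  set z : ℂ := 2 * (s : ℂ) + 2 with hzdef
  have hz : z = ((2 * s + 2 : ℕ) : ℂ) := by push_cast [hzdef]; ring
  have hzre : 1 < z.re := by
    rw [hz, Complex.natCast_re]
    exact_mod_cast by omega
  -- the complex term function
  set f : ℕ → ℂ := fun n => ((μ n : ℤ) : ℂ) / (n : ℂ) ^ (2 * s + 2) with hfdef
  have hterm_eq : ∀ n, LSeries.term (fun n => ((μ n : ℤ) : ℂ)) z n = f n := by
    intro n
    rw [LSeries.term_def]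
    rcases eq_or_ne n 0 with rfl | hn
    · simp [hfdef]
    · rw [if_neg hn, hz, Complex.cpow_natCast]
  have hmusum : LSeriesSummable (fun n => ((μ n : ℤ) : ℂ)) z :=
    LSeriesSummable_moebius_iff.mpr hzre
  have hfsum : Summable f := hmusum.congr hterm_eq
  have hζne : riemannZeta z ≠ 0 := riemannZeta_ne_zero_of_one_lt_re hzre
  have htsum : ∑' n, f n = 1 / riemannZeta z := by
    have h2 := ArithmeticFunction.LSeries_zeta_mul_Lseries_moebius (s := z) hzre
    rw [LSeries_zeta_eq_riemannZeta hzre] at h2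
    have h3 : LSeries (fun n => ((μ n : ℤ) : ℂ)) z = ∑' n, f n := tsum_congr hterm_eq
    rw [← h3, eq_div_iff hζne, mul_comm]
    exact h2
  -- the majorant constant
  have hCsum : Summable (fun k : ℕ => 1 / ((k : ℝ) + 1) ^ 2) := by
    have := (summable_nat_add_iff (f := fun n : ℕ => 1 / (n : ℝ) ^ 2) 1).mpr
      (Real.summable_one_div_nat_pow.mpr one_lt_two)
    refine this.congr fun k => ?_
    push_cast
    ring_nf
  set C : ℝ := ∑' k : ℕ, 1 / ((k : ℝ) + 1) ^ 2 with hCdef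
  have hC0 : 0 ≤ C := tsum_nonneg fun k => by positivity
  rw [Asymptotics.isBigO_iff]
  refine ⟨C, ?_⟩
  filter_upwards [eventually_ge_atTop (3 : ℝ)] with x hx3
  have hx0 : (0 : ℝ) < x := by linarith
  have hx1 : (1 : ℝ) ≤ x := by linarith
  set N : ℕ := ⌊x⌋₊ with hNdef
  set K : ℕ := N.sqrt + 1 with hKdef
  -- rewrite the partial sum
  have hsum1 : (∑ d ∈ Finset.Icc 1 N,
      (∑ q ∈ d.divisorsAntidiagonal,
        ((μ q.1 : ℤ) : ℝ) * |((μ q.2 : ℤ) : ℝ)|) / (d : ℝ) ^ (s + 1))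
      = ∑ m ∈ Finset.Icc 1 N.sqrt, ((μ m : ℤ) : ℝ) / (m : ℝ) ^ (2 * s + 2) := by
    rw [← reindex s N]
    exact Finset.sum_congr rfl fun d _ => by rw [conv_real]
  have hsum2 : ((∑ m ∈ Finset.Icc 1 N.sqrt, ((μ m : ℤ) : ℝ) / (m : ℝ) ^ (2 * s + 2) : ℝ) : ℂ)
      = ∑ m ∈ Finset.range K, f m := by
    have h0 : ∑ m ∈ Finset.range K, f m = ∑ m ∈ Finset.Icc 1 N.sqrt, f m := by
      rw [hKdef, Finset.range_eq_Ico,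
        Finset.sum_eq_sum_Ico_succ_bot (Nat.succ_pos _) f, ← Finset.Ico_add_one_right_eq_Icc]
      have hf0 : f 0 = 0 := by simp [hfdef]
      rw [hf0, zero_add]
      rfl
    rw [h0]
    push_cast
    rfl
  -- the tail
  have htail := Summable.sum_add_tsum_nat_add (f := f) K hfsum
  have hdiff : ((∑ d ∈ Finset.Icc 1 N,
      (∑ q ∈ d.divisorsAntidiagonal,
        ((μ q.1 : ℤ) : ℝ) * |((μ q.2 : ℤ) : ℝ)|) / (d : ℝ) ^ (s + 1) : ℝ) : ℂ)
      - 1 / riemannZeta z = -(∑' k : ℕ, f (k + K)) := by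
    rw [hsum1, hsum2, ← htsum, ← htail]
    ring
  rw [hdiff, norm_neg]
  -- bound the tail
  have hxK : x < ((K : ℝ)) ^ 2 := by
    have h1 : x < (N : ℝ) + 1 := Nat.lt_floor_add_one x
    have h2 : N < K * K := Nat.lt_succ_sqrt N
    have h3 : ((N : ℝ)) + 1 ≤ ((K * K : ℕ) : ℝ) := by exact_mod_cast h2
    have hK : (K : ℝ) = (N.sqrt : ℝ) + 1 := by rw [hKdef]; push_cast; ring
    push_cast at h3
    nlinarith
  have hptwise : ∀ k : ℕ, ‖f (k + K)‖ ≤ (x ^ s)⁻¹ * (1 / ((k : ℝ) + 1) ^ 2) := by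
    intro k
    set n : ℕ := k + K with hndef
    have hn1 : (1 : ℝ) ≤ (n : ℝ) := by
      have : 1 ≤ n := by omega
      exact_mod_cast this
    have hnum : ‖((μ n : ℤ) : ℂ)‖ ≤ 1 := by
      rw [Complex.norm_intCast]
      exact_mod_cast abs_moebius_le_one (n := n)
    have hden : ‖((n : ℂ)) ^ (2 * s + 2)‖ = (n : ℝ) ^ (2 * s + 2) := by
      rw [norm_pow, Complex.norm_natCast]
    have h1 : ‖f n‖ ≤ 1 / (n : ℝ) ^ (2 * s + 2) := by
      rw [hfdef]
      simp only []
      rw [norm_div, hden]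
      gcongr
    refine h1.trans ?_
    have hk1n : ((k : ℝ) + 1) ≤ (n : ℝ) := by
      have h : k + 1 ≤ n := by omega
      exact_mod_cast h
    have hbig : x ^ s * ((k : ℝ) + 1) ^ 2 ≤ (n : ℝ) ^ (2 * s + 2) := by
      have hKn : (K : ℝ) ≤ (n : ℝ) := by
        have h : K ≤ n := by omega
        exact_mod_cast h
      have hxs : x ^ s ≤ ((n : ℝ) ^ 2) ^ s := by
        refine pow_le_pow_left₀ hx0.le ?_ s
        calc x ≤ (K : ℝ) ^ 2 := hxK.le
        _ ≤ (n : ℝ) ^ 2 := by gcongr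
      have hk2 : ((k : ℝ) + 1) ^ 2 ≤ (n : ℝ) ^ 2 :=
        pow_le_pow_left₀ (by positivity) hk1n 2
      calc x ^ s * ((k : ℝ) + 1) ^ 2 ≤ ((n : ℝ) ^ 2) ^ s * (n : ℝ) ^ 2 := by
            exact mul_le_mul hxs hk2 (by positivity) (by positivity)
        _ = (n : ℝ) ^ (2 * s + 2) := by rw [← pow_mul, ← pow_add]
    calc (1 : ℝ) / (n : ℝ) ^ (2 * s + 2) ≤ 1 / (x ^ s * ((k : ℝ) + 1) ^ 2) :=
      one_div_le_one_div_of_le (by positivity) hbig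
    _ = (x ^ s)⁻¹ * (1 / ((k : ℝ) + 1) ^ 2) := by
      rw [one_div, mul_inv, one_div]
  have hnorm : ‖∑' k : ℕ, f (k + K)‖ ≤ (x ^ s)⁻¹ * C := by
    have hsumnorm : Summable (fun k : ℕ => ‖f (k + K)‖) :=
      ((summable_nat_add_iff K).mpr hfsum).norm
    refine (norm_tsum_le_tsum_norm hsumnorm).trans ?_
    have hmaj : Summable (fun k : ℕ => (x ^ s)⁻¹ * (1 / ((k : ℝ) + 1) ^ 2)) := hCsum.mul_left _
    refine (Summable.tsum_le_tsum hptwise hsumnorm hmaj).trans_eq ?_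
    rw [tsum_mul_left]
  refine hnorm.trans ?_
  have hlog1 : 1 ≤ Real.log x := by
    rw [Real.le_log_iff_exp_le hx0]
    calc Real.exp 1 ≤ 2.7182818286 := Real.exp_one_lt_d9.le
    _ ≤ x := by linarith
  have hrpow : x ^ (-(s : ℝ)) = (x ^ s)⁻¹ := by
    rw [Real.rpow_neg hx0.le, Real.rpow_natCast]
  have hb0 : 0 ≤ x ^ (-(s : ℝ)) * Real.log x :=
    mul_nonneg (Real.rpow_nonneg hx0.le _) (by linarith)
  rw [Real.norm_of_nonneg hb0, hrpow]
  calc (x ^ s)⁻¹ * C = C * ((x ^ s)⁻¹ * 1) := by ring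
  _ ≤ C * ((x ^ s)⁻¹ * Real.log x) := by gcongr
end
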